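/- arXiv:math/0702165 — 3 statements merged into one kernel-verified Lean document; each statement's English description precedes it below -/
import Mathlib

section
/- Let F be a finite set with an involution ϱ having l = |Fix(ϱ)| ∈ {0, 1} fixed points and k = |F ∖ Fix(ϱ)|/2 two-element orbits. Then the configuration space Conf⁺_{(F,ϱ)} has exactly 2^k connected components. -/
open scoped Classical

noncomputable section

/-- Complex conjugation on `ℙ¹(ℂ) = ℂ ∪ {∞}` (the one-point compactification of `ℂ`),
fixing `∞`. -/
def conjP : OnePoint ℂ → OnePoint ℂ :=
  fun z => Option.map (fun w => (starRingEnd ℂ) w) z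

/-- `ℙ¹(ℝ) = ℝ ∪ {∞}` as a subset of `ℙ¹(ℂ)`. -/
def P1R : Set (OnePoint ℂ) :=
  insert OnePoint.infty {z : OnePoint ℂ | ∃ r : ℝ, z = ((r : ℂ) : OnePoint ℂ)}

/-- The Möbius transformation of `ℙ¹(ℂ)` associated to a 2×2 complex matrix
`m = !![a, b; c, d]`, i.e. `z ↦ (a z + b) / (c z + d)` extended to `∞` as usual. -/
def moeb (m : Matrix (Fin 2) (Fin 2) ℂ) : OnePoint ℂ → OnePoint ℂ :=
  fun z =>
    Option.rec (motive := fun _ => OnePoint ℂ)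
      (if m 1 0 = 0 then OnePoint.infty
       else ((m 0 0 / m 1 0 : ℂ) : OnePoint ℂ))
      (fun w =>
        if m 1 0 * w + m 1 1 = 0 then OnePoint.infty
        else (((m 0 0 * w + m 0 1) / (m 1 0 * w + m 1 1) : ℂ) : OnePoint ℂ))
      z

/-- The Möbius action of `SL₂(ℝ)` on `ℙ¹(ℂ)` (a real matrix acts through its
complexification). -/
def moebSL (g : Matrix.SpecialLinearGroup (Fin 2) ℝ) : OnePoint ℂ → OnePoint ℂ :=
  moeb ((g : Matrix (Fin 2) (Fin 2) ℝ).map Complex.ofReal)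

/-- The configuration space `Conf⁺_{(F,ϱ)}`: injective tuples `(z_f)_{f ∈ F}` in `ℙ¹(ℂ)`
with `z_f ∈ ℙ¹(ℝ)` for fixed points `f` of `ϱ`, and `z_f ∉ ℙ¹(ℝ)`, `z_{ϱ f} = conj (z_f)`
for non-fixed `f`.  As a set of functions it carries the subspace topology of the
product topology. -/
def ConfPlus (F : Type) (ϱ : F → F) : Set (F → OnePoint ℂ) :=
  {z | Function.Injective z ∧ (∀ f, ϱ f = f → z f ∈ P1R) ∧
       (∀ f, ϱ f ≠ f → z f ∉ P1R ∧ z (ϱ f) = conjP (z f))}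

/-- The antipodal involution `z ↦ -1/z̄` of `ℙ¹(ℂ)`, interchanging `0` and `∞`. -/
def antip : OnePoint ℂ → OnePoint ℂ :=
  fun z =>
    Option.rec (motive := fun _ => OnePoint ℂ) (((0 : ℂ) : OnePoint ℂ))
      (fun w =>
        if w = 0 then OnePoint.infty
        else (((-1) / (starRingEnd ℂ) w : ℂ) : OnePoint ℂ))
      z

/-- The configuration space `Conf^∅_{(F,ϱ)}`: injective tuples `(z_f)_{f ∈ F}` in `ℙ¹(ℂ)`
with `z_{ϱ f} = -1/z̄_f` for all `f`. -/
def ConfEmpty (F : Type) (ϱ : F → F) : Set (F → OnePoint ℂ) :=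
  {z | Function.Injective z ∧ ∀ f, z (ϱ f) = antip (z f)}

/-- The orbit relation of the diagonal `SL₂(ℝ)` Möbius action on `Conf⁺_{(F,ϱ)}`;
`Quot (slRel F ϱ)` is the quotient `Conf⁺_{(F,ϱ)}/SL₂(ℝ)` with the quotient topology. -/
def slRel (F : Type) (ϱ : F → F) (x y : ↥(ConfPlus F ϱ)) : Prop :=
  ∃ g : Matrix.SpecialLinearGroup (Fin 2) ℝ, ∀ f, moebSL g (x.1 f) = y.1 f

/-- The orbit relation of the diagonal `SU(2)` Möbius action on `Conf^∅_{(F,ϱ)}`;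
`Quot (suRel F ϱ)` is the quotient `Conf^∅_{(F,ϱ)}/SU(2)` with the quotient topology. -/
def suRel (F : Type) (ϱ : F → F) (x y : ↥(ConfEmpty F ϱ)) : Prop :=
  ∃ g : Matrix.specialUnitaryGroup (Fin 2) ℂ,
    ∀ f, moeb (g : Matrix (Fin 2) (Fin 2) ℂ) (x.1 f) = y.1 f

/-- The negation map `e : (z_f) ↦ (-z_f)` on tuples in `ℙ¹(ℂ)` (with `-∞ = ∞`). -/
def negP : OnePoint ℂ → OnePoint ℂ :=
  fun z => Option.map (fun w => -w) z

open OnePoint Complex Set Filter Topology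

lemma infty_mem_P1R : (∞ : OnePoint ℂ) ∈ P1R := Set.mem_insert _ _

lemma coe_mem_P1R_iff {c : ℂ} : ((c : OnePoint ℂ) ∈ P1R) ↔ c.im = 0 := by
  constructor
  · rintro (h | ⟨r, hr⟩)
    · exact absurd h (OnePoint.coe_ne_infty c)
    · rw [OnePoint.coe_eq_coe] at hr; rw [hr]; simp
  · intro h
    refine Set.mem_insert_of_mem _ ⟨c.re, ?_⟩
    rw [OnePoint.coe_eq_coe]
    exact Complex.ext (by simp) (by simp [h])

lemma not_mem_P1R_iff {w : OnePoint ℂ} : w ∉ P1R ↔ ∃ c : ℂ, w = (c : OnePoint ℂ) ∧ c.im ≠ 0 := by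
  cases w with
  | infty => simp [infty_mem_P1R]
    -- need: ¬(∞ ∉ P1R) ↔ ... ; simp should close using infty_mem_P1R and coe_ne_infty
  | coe c =>
    simp only [coe_mem_P1R_iff]
    constructor
    · intro h; exact ⟨c, rfl, h⟩
    · rintro ⟨c', hc', h⟩; rw [OnePoint.coe_eq_coe] at hc'; rwa [hc']

/-- sign of the imaginary part, `false` on `ℙ¹(ℝ)`. -/
def sgnPt : OnePoint ℂ → Bool := fun w => OnePoint.rec false (fun c => decide (0 < c.im)) w

@[simp] lemma sgnPt_infty : sgnPt ∞ = false := rfl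
@[simp] lemma sgnPt_coe (c : ℂ) : sgnPt (c : OnePoint ℂ) = decide (0 < c.im) := rfl

lemma sgnPt_of_mem_P1R {w : OnePoint ℂ} (h : w ∈ P1R) : sgnPt w = false := by
  cases w with
  | infty => rfl
  | coe c => rw [coe_mem_P1R_iff] at h; simp [h]

lemma conjP_coe (c : ℂ) : conjP (c : OnePoint ℂ) = ((starRingEnd ℂ) c : OnePoint ℂ) := rfl
lemma conjP_infty : conjP ∞ = ∞ := rfl

lemma sgnPt_conjP {c : ℂ} (h : c.im ≠ 0) :
    sgnPt (conjP (c : OnePoint ℂ)) = !(sgnPt (c : OnePoint ℂ)) := by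
  rw [conjP_coe, sgnPt_coe, sgnPt_coe]
  rcases lt_or_gt_of_ne h with h' | h'
  · simp [Complex.conj_im, h', not_lt.2 h'.le]
  · simp [Complex.conj_im, h', not_lt.2 h'.le, neg_neg, neg_pos]
/-- The set of admissible sign patterns. -/
def Pat (F : Type) (ϱ : F → F) : Type :=
  {s : F → Bool // (∀ f, ϱ f = f → s f = false) ∧ ∀ f, ϱ f ≠ f → s (ϱ f) = !(s f)}

lemma nonfix_rho {F : Type} {ϱ : F → F} (hϱ : Function.Involutive ϱ) {f : F}
    (hf : ϱ f ≠ f) : ϱ (ϱ f) ≠ ϱ f := by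
  rw [hϱ f]; exact fun h => hf h.symm

lemma card_pat (F : Type) [Fintype F] (ϱ : F → F) (hϱ : Function.Involutive ϱ) (k : ℕ)
    (hk : Nat.card {f : F // ϱ f ≠ f} = 2 * k) : Nat.card (Pat F ϱ) = 2 ^ k := by
  classical
  let ι : F → ℕ := fun f => (Fintype.equivFin F f : ℕ)
  have ιinj : Function.Injective ι := fun a b h => (Fintype.equivFin F).injective (Fin.val_injective h)
  let R := {f : F // ϱ f ≠ f ∧ ι f < ι (ϱ f)}
  have hmem' : ∀ f : F, ϱ f ≠ f → ¬(ι f < ι (ϱ f)) → ι (ϱ f) < ι f := by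
    intro f hf hlt
    rcases lt_trichotomy (ι f) (ι (ϱ f)) with h | h | h
    · exact absurd h hlt
    · exact absurd (ιinj h) (fun h' => hf h'.symm)
    · exact h
  have hmem : ∀ f : F, ϱ f ≠ f → ¬(ι f < ι (ϱ f)) → (ϱ (ϱ f) ≠ ϱ f ∧ ι (ϱ f) < ι (ϱ (ϱ f))) := by
    intro f hf hlt
    rw [hϱ f]
    exact ⟨fun h => hf h.symm, hmem' f hf hlt⟩
  have hNcard : Nat.card R * 2 = 2 * k := by
    have e : Function.Bijective (fun p : R × Bool =>
        (if p.2 then ⟨p.1.1, p.1.2.1⟩ else ⟨ϱ p.1.1, nonfix_rho hϱ p.1.2.1⟩ :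
          {f : F // ϱ f ≠ f})) := by
      constructor
      · rintro ⟨⟨r, hr⟩, b⟩ ⟨⟨r', hr'⟩, b'⟩ h
        simp only [Prod.mk.injEq, Subtype.mk.injEq]
        cases b <;> cases b' <;>
          simp only [if_true, if_false, Bool.false_eq_true, Subtype.mk.injEq] at h
        · exact ⟨Subtype.ext (hϱ.injective h), rfl⟩
        · exfalso
          have h2 : ϱ r = r' := h
          have h3 : ι r' < ι (ϱ r') := hr'.2
          rw [← h2, hϱ r] at h3
          exact absurd (hr.2.trans h3) (lt_irrefl _)
        · exfalso
          have h2 : r = ϱ r' := h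
          have h3 : ι r < ι (ϱ r) := hr.2
          rw [h2, hϱ r'] at h3
          exact absurd (hr'.2.trans h3) (lt_irrefl _)
        · exact ⟨Subtype.ext h, rfl⟩
      · rintro ⟨f, hf⟩
        by_cases hlt : ι f < ι (ϱ f)
        · exact ⟨⟨⟨f, hf, hlt⟩, true⟩, rfl⟩
        · refine ⟨⟨⟨ϱ f, hmem f hf hlt⟩, false⟩, ?_⟩
          simp only [Bool.false_eq_true, if_false]
          exact Subtype.ext (hϱ f)
    have hce := Nat.card_eq_of_bijective _ e
    rw [← hk, ← hce, Nat.card_prod]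
    simp [Nat.card_eq_fintype_card]
  have hRcard : Nat.card R = k := by omega
  have hres : Function.Bijective (fun (s : Pat F ϱ) (r : R) => s.1 r.1) := by
    constructor
    · rintro ⟨s, hs0, hs1⟩ ⟨s', hs0', hs1'⟩ h
      have key : ∀ f, s f = s' f := by
        intro f
        by_cases hf : ϱ f = f
        · rw [hs0 f hf, hs0' f hf]
        · by_cases hlt : ι f < ι (ϱ f)
          · exact congrFun h ⟨f, hf, hlt⟩
          · have hmm := hmem f hf hlt
            have h1 := hs1 (ϱ f) hmm.1
            have h2 := hs1' (ϱ f) hmm.1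
            rw [hϱ f] at h1 h2
            rw [h1, h2]
            exact congrArg Bool.not (congrFun h ⟨ϱ f, hmm⟩)
      exact Subtype.ext (funext key)
    · intro t
      refine ⟨⟨fun f => if h : ϱ f ≠ f ∧ ι f < ι (ϱ f) then t ⟨f, h⟩
        else if h' : ϱ (ϱ f) ≠ ϱ f ∧ ι (ϱ f) < ι (ϱ (ϱ f)) then !(t ⟨ϱ f, h'⟩) else false,
        ?_, ?_⟩, ?_⟩
      · intro f hf
        beta_reduce
        rw [dif_neg (by simp [hf]), dif_neg (by simp [hf, hϱ f])]
      · intro f hf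
        beta_reduce
        have hϱ2 : ∀ a, ϱ (ϱ a) = a := hϱ
        simp only [hϱ2]
        by_cases hlt : ι f < ι (ϱ f)
        · rw [dif_neg (fun h => absurd (hlt.trans h.2) (lt_irrefl _)), dif_pos ⟨hf, hlt⟩,
            dif_pos ⟨hf, hlt⟩]
        · rw [dif_pos ⟨fun h => hf h.symm, hmem' f hf hlt⟩, dif_neg (fun h => hlt h.2),
            dif_pos ⟨fun h => hf h.symm, hmem' f hf hlt⟩, Bool.not_not]
      · funext r
        exact dif_pos r.2
  have hcp := Nat.card_eq_of_bijective _ hres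
  rw [hcp]
  have hcf : Nat.card (R → Bool) = 2 ^ Nat.card R := by
    simp [Nat.card_eq_fintype_card, Fintype.card_fun]
  rw [hcf, hRcard]
/-- The sign pattern of a configuration. -/
def sgnMap (F : Type) (ϱ : F → F) (x : ↥(ConfPlus F ϱ)) : F → Bool := fun f => sgnPt (x.1 f)

lemma sgnMap_mem_pat (F : Type) (ϱ : F → F) (x : ↥(ConfPlus F ϱ)) :
    (∀ f, ϱ f = f → sgnMap F ϱ x f = false) ∧
      ∀ f, ϱ f ≠ f → sgnMap F ϱ x (ϱ f) = !(sgnMap F ϱ x f) := by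
  obtain ⟨z, hz⟩ := x
  refine ⟨fun f hf => sgnPt_of_mem_P1R (hz.2.1 f hf), fun f hf => ?_⟩
  obtain ⟨hnot, hconj⟩ := hz.2.2 f hf
  obtain ⟨c, hc, him⟩ := not_mem_P1R_iff.mp hnot
  show sgnPt (z (ϱ f)) = !(sgnPt (z f))
  rw [hconj, hc, sgnPt_conjP him]

/-- The sign pattern of a configuration, as an element of `Pat`. -/
def sgnPat (F : Type) (ϱ : F → F) (x : ↥(ConfPlus F ϱ)) : Pat F ϱ :=
  ⟨sgnMap F ϱ x, sgnMap_mem_pat F ϱ x⟩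

/-- open upper/lower half plane in `ℙ¹(ℂ)` -/
def UHP : Set (OnePoint ℂ) := (fun c : ℂ => (c : OnePoint ℂ)) '' {c : ℂ | 0 < c.im}
def LHP : Set (OnePoint ℂ) := (fun c : ℂ => (c : OnePoint ℂ)) '' {c : ℂ | c.im < 0}

lemma isOpen_UHP : IsOpen UHP :=
  OnePoint.isOpenEmbedding_coe.isOpenMap _ (isOpen_lt continuous_const Complex.continuous_im)

lemma isOpen_LHP : IsOpen LHP :=
  OnePoint.isOpenEmbedding_coe.isOpenMap _ (isOpen_lt Complex.continuous_im continuous_const)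

lemma sgnPt_eq_true_of_mem_UHP {w : OnePoint ℂ} (h : w ∈ UHP) : sgnPt w = true := by
  obtain ⟨c, hc, rfl⟩ := h; simpa using hc

lemma sgnPt_eq_false_of_mem_LHP {w : OnePoint ℂ} (h : w ∈ LHP) : sgnPt w = false := by
  obtain ⟨c, hc, rfl⟩ := h
  simpa using le_of_lt hc

lemma isLocallyConstant_sgnMap (F : Type) [Fintype F] (ϱ : F → F) :
    IsLocallyConstant (sgnMap F ϱ) := by
  rw [IsLocallyConstant.iff_exists_open]
  intro x
  refine ⟨⋂ f : F, (if ϱ f = f then Set.univ else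
      (fun y : ↥(ConfPlus F ϱ) => y.1 f) ⁻¹' (if sgnPt (x.1 f) = true then UHP else LHP)),
    ?_, ?_, ?_⟩
  · refine isOpen_iInter_of_finite (fun f => ?_)
    split_ifs with h1 h2
    · exact isOpen_univ
    · exact (isOpen_UHP.preimage ((continuous_apply f).comp continuous_subtype_val))
    · exact (isOpen_LHP.preimage ((continuous_apply f).comp continuous_subtype_val))
  · refine Set.mem_iInter.mpr (fun f => ?_)
    split_ifs with h1 h2
    · trivial
    · obtain ⟨c, hc, him⟩ := not_mem_P1R_iff.mp (x.2.2.2 f h1).1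
      refine Set.mem_preimage.mpr ⟨c, ?_, hc.symm⟩
      rw [hc, sgnPt_coe] at h2
      simpa using h2
    · obtain ⟨c, hc, him⟩ := not_mem_P1R_iff.mp (x.2.2.2 f h1).1
      refine Set.mem_preimage.mpr ⟨c, ?_, hc.symm⟩
      rw [hc, sgnPt_coe] at h2
      simp only [decide_eq_true_eq] at h2
      exact lt_of_le_of_ne (not_lt.mp h2) him
  · intro y hy
    funext f
    have hyf := Set.mem_iInter.mp hy f
    show sgnPt (y.1 f) = sgnPt (x.1 f)
    by_cases h1 : ϱ f = f
    · rw [sgnPt_of_mem_P1R (y.2.2.1 f h1), sgnPt_of_mem_P1R (x.2.2.1 f h1)]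
    · rw [if_neg h1] at hyf
      by_cases h2 : sgnPt (x.1 f) = true
      · rw [if_pos h2] at hyf
        rw [h2, sgnPt_eq_true_of_mem_UHP hyf]
      · rw [if_neg h2] at hyf
        rw [sgnPt_eq_false_of_mem_LHP hyf, Bool.not_eq_true] at *
        exact h2.symm
lemma exists_conf (F : Type) [Fintype F] (ϱ : F → F) (hϱ : Function.Involutive ϱ)
    (hsub : ∀ f g : F, ϱ f = f → ϱ g = g → f = g) (s : Pat F ϱ) :
    ∃ x : ↥(ConfPlus F ϱ), sgnPat F ϱ x = s := by
  classical
  let ι : F → ℕ := fun f => (Fintype.equivFin F f : ℕ)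
  have ιinj : Function.Injective ι := fun a b h => (Fintype.equivFin F).injective (Fin.val_injective h)
  let c : F → ℂ := fun f => ⟨(min (ι f) (ι (ϱ f)) : ℝ), if s.1 f then 1 else -1⟩
  let z : F → OnePoint ℂ := fun f => if ϱ f = f then ∞ else ((c f : ℂ) : OnePoint ℂ)
  have him : ∀ f, (c f).im ≠ 0 := by
    intro f
    show (if s.1 f then (1:ℝ) else -1) ≠ 0
    split_ifs <;> norm_num
  have horb : ∀ f f', ϱ f ≠ f → ϱ f' ≠ f' → c f = c f' → f' = f ∨ f' = ϱ f := by
    intro f f' hf hf' hcc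
    have hre : (min (ι f) (ι (ϱ f)) : ℝ) = (min (ι f') (ι (ϱ f')) : ℝ) := congrArg Complex.re hcc
    have hmin : min (ι f) (ι (ϱ f)) = min (ι f') (ι (ϱ f')) := by exact_mod_cast hre
    rcases min_cases (ι f) (ι (ϱ f)) with ⟨h1, -⟩ | ⟨h1, -⟩ <;>
      rcases min_cases (ι f') (ι (ϱ f')) with ⟨h2, -⟩ | ⟨h2, -⟩
    · exact Or.inl (ιinj (by rw [← h1, ← h2, hmin])).symm
    · refine Or.inr ?_
      have : f = ϱ f' := ιinj (by rw [← h1, ← h2, hmin])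
      rw [this, hϱ f']
    · exact Or.inr (ιinj (by rw [← h1, ← h2, hmin])).symm
    · exact Or.inl (hϱ.injective (ιinj (by rw [← h1, ← h2, hmin]))).symm
  have hsf : ∀ f, ϱ f ≠ f → s.1 (ϱ f) ≠ s.1 f := by
    intro f hf
    rw [s.2.2 f hf]
    cases s.1 f <;> simp
  have hmemz : z ∈ ConfPlus F ϱ := by
    refine ⟨?_, ?_, ?_⟩
    · intro f f' h
      by_cases hf : ϱ f = f <;> by_cases hf' : ϱ f' = f'
      · exact hsub f f' hf hf'
      · rw [show z f = ∞ from if_pos hf, show z f' = ((c f' : ℂ) : OnePoint ℂ) from if_neg hf'] at h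
        exact absurd h.symm (OnePoint.coe_ne_infty _)
      · rw [show z f' = ∞ from if_pos hf', show z f = ((c f : ℂ) : OnePoint ℂ) from if_neg hf] at h
        exact absurd h (OnePoint.coe_ne_infty _)
      · rw [show z f = ((c f : ℂ) : OnePoint ℂ) from if_neg hf,
          show z f' = ((c f' : ℂ) : OnePoint ℂ) from if_neg hf'] at h
        have hcc : c f = c f' := OnePoint.coe_injective h
        rcases horb f f' hf hf' hcc with h' | h'
        · exact h'.symm
        · exfalso
          have : s.1 f' = s.1 f := by
            have := congrArg Complex.im hcc
            show _ = _
            by_cases hb : s.1 f <;> by_cases hb' : s.1 f' <;>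
              simp [c, hb, hb'] at this ⊢ <;> norm_num at this
          rw [h'] at this
          exact hsf f hf this
    · intro f hf
      rw [show z f = ∞ from if_pos hf]
      exact infty_mem_P1R
    · intro f hf
      constructor
      · rw [show z f = ((c f : ℂ) : OnePoint ℂ) from if_neg hf]
        exact fun hmem => him f (coe_mem_P1R_iff.mp hmem)
      · rw [show z f = ((c f : ℂ) : OnePoint ℂ) from if_neg hf,
          show z (ϱ f) = ((c (ϱ f) : ℂ) : OnePoint ℂ) from if_neg (nonfix_rho hϱ hf), conjP_coe,
          OnePoint.coe_eq_coe]
        refine Complex.ext ?_ ?_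
        · show (min (ι (ϱ f)) (ι (ϱ (ϱ f))) : ℝ) = (c f).re
          rw [hϱ f]
          exact min_comm _ _
        · show (if s.1 (ϱ f) then (1:ℝ) else -1) = -(if s.1 f then (1:ℝ) else -1)
          rw [s.2.2 f hf]
          cases s.1 f <;> norm_num
  refine ⟨⟨z, hmemz⟩, ?_⟩
  refine Subtype.ext (funext fun f => ?_)
  show sgnPt (z f) = s.1 f
  by_cases hf : ϱ f = f
  · rw [show z f = ∞ from if_pos hf, sgnPt_infty, s.2.1 f hf]
  · rw [show z f = ((c f : ℂ) : OnePoint ℂ) from if_neg hf, sgnPt_coe]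
    show decide (0 < (if s.1 f then (1:ℝ) else -1)) = s.1 f
    cases hb : s.1 f <;> simp [hb] <;> norm_num
lemma tendsto_coe_infty_of_norm {α : Type*} {l : Filter α} {f : α → ℂ}
    (h : Filter.Tendsto (fun a => ‖f a‖) l Filter.atTop) :
    Filter.Tendsto (fun a => ((f a : ℂ) : OnePoint ℂ)) l (𝓝 ∞) := by
  have h1 : Filter.Tendsto f l (Filter.cocompact ℂ) := by
    rw [← Metric.cobounded_eq_cocompact, ← comap_norm_atTop]
    exact Filter.tendsto_comap_iff.mpr h
  have h2 : Filter.Tendsto f l (Filter.coclosedCompact ℂ) := by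
    rwa [Filter.coclosedCompact_eq_cocompact]
  exact OnePoint.tendsto_coe_infty.comp h2

lemma joinedIn_P1R_coe_infty (r : ℝ) :
    JoinedIn P1R (((r : ℂ)) : OnePoint ℂ) (∞ : OnePoint ℂ) := by
  classical
  let q : ℝ → OnePoint ℂ := fun t =>
    if t < 1 then (((r + (1 - t)⁻¹ - 1 : ℝ) : ℂ) : OnePoint ℂ) else ∞
  have hqd : ∀ t, q t = if t < 1 then (((r + (1 - t)⁻¹ - 1 : ℝ) : ℂ) : OnePoint ℂ) else ∞ :=
    fun _ => rfl
  have hq0 : q 0 = ((r : ℂ) : OnePoint ℂ) := by rw [hqd]; norm_num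
  have hq1 : q 1 = ∞ := by rw [hqd]; norm_num
  have hmem : ∀ t, q t ∈ P1R := by
    intro t
    rw [hqd]
    split_ifs
    · exact Set.mem_insert_of_mem _ ⟨_, rfl⟩
    · exact infty_mem_P1R
  have hcont : Continuous q := by
    rw [continuous_iff_continuousAt]
    intro t
    rcases lt_trichotomy t 1 with ht | ht | ht
    · have hev : (fun u : ℝ => (((r + (1 - u)⁻¹ - 1 : ℝ) : ℂ) : OnePoint ℂ)) =ᶠ[𝓝 t] q := by
        filter_upwards [IsOpen.mem_nhds isOpen_Iio ht] with u hu
        rw [hqd, if_pos (show _ < (1:ℝ) from hu)]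
      refine ContinuousAt.congr ?_ hev
      refine OnePoint.continuous_coe.continuousAt.comp ?_
      refine Complex.continuous_ofReal.continuousAt.comp ?_
      have hne : (1 : ℝ) - t ≠ 0 := by linarith
      exact ContinuousAt.sub (ContinuousAt.add continuousAt_const
        ((continuousAt_const.sub continuousAt_id).inv₀ hne)) continuousAt_const
    · subst ht
      unfold ContinuousAt
      rw [hq1, ← nhdsLT_sup_nhdsGE (1:ℝ), Filter.tendsto_sup]
      constructor
      · have hev : (fun u : ℝ => (((r + (1 - u)⁻¹ - 1 : ℝ) : ℂ) : OnePoint ℂ)) =ᶠ[𝓝[<] (1:ℝ)] q := by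
          filter_upwards [self_mem_nhdsWithin] with u hu
          rw [hqd, if_pos (show _ < (1:ℝ) from hu)]
        refine Filter.Tendsto.congr' hev ?_
        refine tendsto_coe_infty_of_norm ?_
        have h4 : Filter.Tendsto (fun u : ℝ => (1 - u)) (𝓝[<] (1:ℝ)) (𝓝[>] (0:ℝ)) := by
          rw [tendsto_nhdsWithin_iff]
          constructor
          · have hcs : Filter.Tendsto (fun u : ℝ => (1 - u)) (𝓝 (1:ℝ)) (𝓝 (0:ℝ)) := by
              have hc : Continuous (fun u : ℝ => (1 : ℝ) - u) := by fun_prop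
              simpa using hc.tendsto 1
            exact hcs.mono_left nhdsWithin_le_nhds
          · filter_upwards [self_mem_nhdsWithin] with u hu
            simp only [Set.mem_Iio] at hu
            exact Set.mem_Ioi.mpr (by linarith)
        have h3 : Filter.Tendsto (fun u : ℝ => r + (1 - u)⁻¹ - 1) (𝓝[<] (1:ℝ)) Filter.atTop := by
          have h5 := tendsto_inv_nhdsGT_zero.comp h4
          have h6 := Filter.tendsto_atTop_add_const_left _ r h5
          have h7 := Filter.tendsto_atTop_add_const_right _ (-1) h6
          refine h7.congr (fun u => ?_)
          simp [Function.comp]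
          ring
        refine (tendsto_abs_atTop_atTop.comp h3).congr (fun u => ?_)
        show |r + (1 - u)⁻¹ - 1| = ‖((r + (1 - u)⁻¹ - 1 : ℝ) : ℂ)‖
        rw [Complex.norm_real, Real.norm_eq_abs]
      · have hev : (fun _ : ℝ => (∞ : OnePoint ℂ)) =ᶠ[𝓝[≥] (1:ℝ)] q := by
          filter_upwards [self_mem_nhdsWithin] with u hu
          rw [hqd, if_neg (not_lt.mpr (show (1:ℝ) ≤ u from hu))]
        exact Filter.Tendsto.congr' hev tendsto_const_nhds
    · have hev : (fun _ : ℝ => (∞ : OnePoint ℂ)) =ᶠ[𝓝 t] q := by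
        filter_upwards [IsOpen.mem_nhds isOpen_Ioi ht] with u hu
        rw [hqd, if_neg (not_lt.mpr (le_of_lt (Set.mem_Ioi.mp hu)))]
      exact ContinuousAt.congr continuousAt_const hev
  exact ⟨⟨⟨fun t => q t.1, hcont.comp continuous_subtype_val⟩, hq0, hq1⟩, fun t => hmem t.1⟩

lemma joinedIn_P1R_coe_coe (r s : ℝ) :
    JoinedIn P1R (((r : ℂ)) : OnePoint ℂ) (((s : ℂ)) : OnePoint ℂ) := by
  refine ⟨⟨⟨fun t => ((((1 - t.1) * r + t.1 * s : ℝ) : ℂ) : OnePoint ℂ), ?_⟩, ?_, ?_⟩, ?_⟩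
  · exact OnePoint.continuous_coe.comp (Complex.continuous_ofReal.comp (by fun_prop))
  · show ((((1 - (0:ℝ)) * r + (0:ℝ) * s : ℝ) : ℂ) : OnePoint ℂ) = _
    norm_num
  · show ((((1 - (1:ℝ)) * r + (1:ℝ) * s : ℝ) : ℂ) : OnePoint ℂ) = _
    norm_num
  · exact fun t => Set.mem_insert_of_mem _ ⟨_, rfl⟩

lemma joinedIn_P1R {u v : OnePoint ℂ} (hu : u ∈ P1R) (hv : v ∈ P1R) : JoinedIn P1R u v := by
  have key : ∀ w ∈ P1R, JoinedIn P1R w (∞ : OnePoint ℂ) := by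
    intro w hw
    rcases hw with hw | ⟨r, rfl⟩
    · rw [hw]; exact JoinedIn.refl infty_mem_P1R
    · exact joinedIn_P1R_coe_infty r
  exact (key u hu).trans (key v hv).symm
lemma joined_of_sgn_eq (F : Type) [Fintype F] (ϱ : F → F) (hϱ : Function.Involutive ϱ)
    (hsub : ∀ f g : F, ϱ f = f → ϱ g = g → f = g)
    (x y : ↥(ConfPlus F ϱ)) (h : sgnMap F ϱ x = sgnMap F ϱ y) : Joined x y := by
  classical
  by_cases hFne : Nonempty F
  case neg =>
    have : x = y := Subtype.ext (funext fun f => absurd ⟨f⟩ hFne)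
    rw [this]
  case pos =>
  obtain ⟨a, hxa⟩ : ∃ a : F → ℂ, ∀ f, ϱ f ≠ f → x.1 f = ((a f : ℂ) : OnePoint ℂ) ∧ (a f).im ≠ 0 := by
    refine ⟨fun f => (x.1 f).elim 0 id, fun f hf => ?_⟩
    obtain ⟨c, hc, him⟩ := not_mem_P1R_iff.mp (x.2.2.2 f hf).1
    have hac : (fun f => (x.1 f).elim 0 id) f = c := by beta_reduce; rw [hc]; rfl
    rw [hac]
    exact ⟨hc, him⟩
  obtain ⟨b, hyb⟩ : ∃ b : F → ℂ, ∀ f, ϱ f ≠ f → y.1 f = ((b f : ℂ) : OnePoint ℂ) ∧ (b f).im ≠ 0 := by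
    refine ⟨fun f => (y.1 f).elim 0 id, fun f hf => ?_⟩
    obtain ⟨c, hc, him⟩ := not_mem_P1R_iff.mp (y.2.2.2 f hf).1
    have hac : (fun f => (y.1 f).elim 0 id) f = c := by beta_reduce; rw [hc]; rfl
    rw [hac]
    exact ⟨hc, him⟩
  obtain ⟨s, hs_x, hs_y⟩ : ∃ s : F → Bool, (∀ f, sgnPt (x.1 f) = s f) ∧ (∀ f, sgnPt (y.1 f) = s f) :=
    ⟨fun f => sgnPt (x.1 f), fun f => rfl, fun f => (congrFun h f).symm⟩
  have hsgn : ∀ f, ϱ f ≠ f →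
      (if s f = true then 0 < (a f).im ∧ 0 < (b f).im else (a f).im < 0 ∧ (b f).im < 0) := by
    intro f hf
    have h1 : s f = decide (0 < (a f).im) := by
      rw [← hs_x f, (hxa f hf).1, sgnPt_coe]
    have h2 : s f = decide (0 < (b f).im) := by
      rw [← hs_y f, (hyb f hf).1, sgnPt_coe]
    split_ifs with hsf
    · rw [hsf] at h1 h2
      exact ⟨of_decide_eq_true h1.symm, of_decide_eq_true h2.symm⟩
    · rw [Bool.not_eq_true] at hsf
      rw [hsf] at h1 h2
      constructor
      · exact lt_of_le_of_ne (not_lt.mp (of_decide_eq_false h1.symm)) (hxa f hf).2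
      · exact lt_of_le_of_ne (not_lt.mp (of_decide_eq_false h2.symm)) (hyb f hf).2
  have haconj : ∀ f, ϱ f ≠ f → a (ϱ f) = (starRingEnd ℂ) (a f) := by
    intro f hf
    have h1 := (x.2.2.2 f hf).2
    rw [(hxa f hf).1, conjP_coe, (hxa (ϱ f) (nonfix_rho hϱ hf)).1, OnePoint.coe_eq_coe] at h1
    exact h1
  have hbconj : ∀ f, ϱ f ≠ f → b (ϱ f) = (starRingEnd ℂ) (b f) := by
    intro f hf
    have h1 := (y.2.2.2 f hf).2
    rw [(hyb f hf).1, conjP_coe, (hyb (ϱ f) (nonfix_rho hϱ hf)).1, OnePoint.coe_eq_coe] at h1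
    exact h1
  have hsρ : ∀ f, ϱ f ≠ f → s (ϱ f) = !(s f) := by
    intro f hf
    rw [← hs_x f, ← hs_x (ϱ f)]
    exact (sgnMap_mem_pat F ϱ x).2 f hf
  obtain ⟨d, hd⟩ : ∃ d : F → ℂ, ∀ f, d f = b f - a f := ⟨fun f => b f - a f, fun _ => rfl⟩
  have hdconj : ∀ f, ϱ f ≠ f → d (ϱ f) = (starRingEnd ℂ) (d f) := by
    intro f hf
    rw [hd, hd, haconj f hf, hbconj f hf, ← map_sub]
  have hFinNe : (Finset.univ : Finset F).Nonempty := Finset.univ_nonempty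
  set m : ℝ := Finset.univ.inf' hFinNe
      (fun f => if ϱ f = f then 1 else min |(a f).im| |(b f).im|) with hmdef
  have hm : 0 < m := by
    rw [hmdef, Finset.lt_inf'_iff]
    intro f _
    split_ifs with hf
    · norm_num
    · exact lt_min (abs_pos.mpr (hxa f hf).2) (abs_pos.mpr (hyb f hf).2)
  have hma : ∀ f, ϱ f ≠ f → m ≤ |(a f).im| ∧ m ≤ |(b f).im| := by
    intro f hf
    have h1 : m ≤ (if ϱ f = f then (1:ℝ) else min |(a f).im| |(b f).im|) := by
      rw [hmdef]
      exact Finset.inf'_le (fun f => if ϱ f = f then (1:ℝ) else min |(a f).im| |(b f).im|)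
        (Finset.mem_univ f)
    rw [if_neg hf] at h1
    exact ⟨h1.trans (min_le_left _ _), h1.trans (min_le_right _ _)⟩
  set M : ℝ := Finset.univ.sup' hFinNe (fun f => |(d f).re|) with hMdef
  have hMd : ∀ f, |(d f).re| ≤ M := by
    intro f
    rw [hMdef]
    exact Finset.le_sup' (fun f => |(d f).re|) (Finset.mem_univ f)
  have hM0 : 0 ≤ M := le_trans (abs_nonneg _) (hMd hFne.some)
  set δ₀ : ℝ := m / (2 * (M + 1)) with hδ₀def
  have hδ₀ : 0 < δ₀ := div_pos hm (by linarith)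
  have hδ₀e : δ₀ * (M + 1) = m / 2 := by
    rw [hδ₀def]; field_simp
  have hδ₀M : δ₀ * M < m / 2 := by nlinarith
  let D : Finset ℝ := Finset.image (fun p : F × F =>
      (((a p.2 - a p.1) / (d p.1 - d p.2)).im) /
        Real.sin (Real.pi * (((a p.2 - a p.1) / (d p.1 - d p.2)).re))) Finset.univ
  obtain ⟨δ, hδmem, hδD⟩ : ∃ δ ∈ Set.Ioo (0:ℝ) δ₀, δ ∉ D :=
    (Set.Ioo_infinite hδ₀).exists_notMem_finset D
  obtain ⟨hδ0, hδδ₀⟩ := hδmem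
  obtain ⟨g, hgre, hgim, hgcont⟩ : ∃ g : ℝ → ℂ, (∀ t, (g t).re = t) ∧
      (∀ t, (g t).im = δ * Real.sin (Real.pi * t)) ∧ Continuous g := by
    refine ⟨fun t => (t : ℂ) + ((δ * Real.sin (Real.pi * t) : ℝ) : ℂ) * Complex.I,
      fun t => by
        beta_reduce
        rw [Complex.add_re, Complex.mul_re, Complex.I_re, Complex.I_im, Complex.ofReal_re,
          Complex.ofReal_re, Complex.ofReal_im]
        ring,
      fun t => by
        beta_reduce
        rw [Complex.add_im, Complex.mul_im, Complex.I_re, Complex.I_im, Complex.ofReal_re,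
          Complex.ofReal_im, Complex.ofReal_im]
        ring, ?_⟩
    refine Continuous.add (Complex.continuous_ofReal) ?_
    exact (Complex.continuous_ofReal.comp (continuous_const.mul
      (Real.continuous_sin.comp (continuous_const.mul continuous_id)))).mul continuous_const
  have hg0 : g 0 = 0 := by
    refine Complex.ext ?_ ?_
    · rw [hgre]; simp
    · rw [hgim]; simp
  have hg1 : g 1 = 1 := by
    refine Complex.ext ?_ ?_
    · rw [hgre]; simp
    · rw [hgim]; simp [Real.sin_pi]
  let γ : F → ℝ → ℂ := fun f t => a f + (if s f = true then g t else (starRingEnd ℂ) (g t)) * d f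
  have hγcont : ∀ f, Continuous (γ f) := by
    intro f
    by_cases hsf : s f = true
    · have : γ f = fun t => a f + g t * d f := by funext t; simp only [γ, if_pos hsf]
      rw [this]
      exact continuous_const.add (hgcont.mul continuous_const)
    · have : γ f = fun t => a f + (starRingEnd ℂ) (g t) * d f := by
        funext t; simp only [γ, if_neg hsf]
      rw [this]
      exact continuous_const.add (((continuous_star.comp hgcont)).mul continuous_const)
  have hγ0 : ∀ f, γ f 0 = a f := by
    intro f; show a f + _ * d f = a f
    rw [hg0]; split_ifs <;> simp
  have hγ1 : ∀ f, γ f 1 = b f := by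
    intro f; show a f + _ * d f = b f
    rw [hg1]; split_ifs <;> · rw [hd]; simp
  have hγconj : ∀ f, ϱ f ≠ f → ∀ t, γ (ϱ f) t = (starRingEnd ℂ) (γ f t) := by
    intro f hf t
    show a (ϱ f) + _ * d (ϱ f) = _
    rw [haconj f hf, hdconj f hf, hsρ f hf, map_add, map_mul]
    cases hsf : s f <;>
      simp only [hsf, Bool.not_false, Bool.not_true, if_true, if_false, Bool.false_eq_true,
        Complex.conj_conj]
  have hsin1 : ∀ t : ℝ, |Real.sin (Real.pi * t)| ≤ 1 :=
    fun t => abs_le.mpr ⟨Real.neg_one_le_sin _, Real.sin_le_one _⟩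
  have hIm : ∀ f, (s f = true → ∀ t, (γ f t).im
        = (1 - t) * (a f).im + t * (b f).im + (δ * Real.sin (Real.pi * t)) * (d f).re)
      ∧ (s f ≠ true → ∀ t, (γ f t).im
        = (1 - t) * (a f).im + t * (b f).im - (δ * Real.sin (Real.pi * t)) * (d f).re) := by
    intro f
    constructor
    · intro hsf t
      show (a f + _ * d f).im = _
      rw [if_pos hsf]
      have hdim : (d f).im = (b f).im - (a f).im := by rw [hd]; simp
      rw [Complex.add_im, Complex.mul_im, hgre, hgim, hdim]
      ring
    · intro hsf t
      show (a f + _ * d f).im = _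
      rw [if_neg hsf]
      have hdim : (d f).im = (b f).im - (a f).im := by rw [hd]; simp
      rw [Complex.add_im, Complex.mul_im, Complex.conj_re, Complex.conj_im, hgre, hgim, hdim]
      ring
  have him_bound : ∀ f, ϱ f ≠ f → ∀ t : ℝ, 0 ≤ t → t ≤ 1 →
      (if s f = true then m / 2 ≤ (γ f t).im else (γ f t).im ≤ -(m / 2)) := by
    intro f hf t ht0 ht1
    have hsinb : |δ * Real.sin (Real.pi * t) * (d f).re| ≤ δ₀ * M := by
      rw [abs_mul, abs_mul, abs_of_pos hδ0]
      have h1 : |Real.sin (Real.pi * t)| * |(d f).re| ≤ 1 * M :=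
        mul_le_mul (hsin1 t) (hMd f) (abs_nonneg _) zero_le_one
      have h2 : δ * (|Real.sin (Real.pi * t)| * |(d f).re|) ≤ δ₀ * (1 * M) := by
        apply mul_le_mul hδδ₀.le h1 (by positivity) hδ₀.le
      calc δ * |Real.sin (Real.pi * t)| * |(d f).re|
          = δ * (|Real.sin (Real.pi * t)| * |(d f).re|) := by ring
        _ ≤ δ₀ * (1 * M) := h2
        _ = δ₀ * M := by ring
    have habs := abs_le.mp hsinb
    split_ifs with hsf
    · obtain ⟨ha', hb'⟩ : 0 < (a f).im ∧ 0 < (b f).im := by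
        have := hsgn f hf; rwa [if_pos hsf] at this
      have hma' := (hma f hf).1
      have hmb' := (hma f hf).2
      rw [abs_of_pos ha'] at hma'
      rw [abs_of_pos hb'] at hmb'
      rw [(hIm f).1 hsf t]
      nlinarith
    · obtain ⟨ha', hb'⟩ : (a f).im < 0 ∧ (b f).im < 0 := by
        have := hsgn f hf; rwa [if_neg hsf] at this
      have hma' := (hma f hf).1
      have hmb' := (hma f hf).2
      rw [abs_of_neg ha'] at hma'
      rw [abs_of_neg hb'] at hmb'
      rw [(hIm f).2 hsf t]
      nlinarith
  have hγim_ne : ∀ f, ϱ f ≠ f → ∀ t : ℝ, 0 ≤ t → t ≤ 1 → (γ f t).im ≠ 0 := by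
    intro f hf t ht0 ht1
    have := him_bound f hf t ht0 ht1
    split_ifs at this <;> intro hc <;> rw [hc] at this <;> linarith
  -- key injectivity for "upper" pairs
  have hkey : ∀ f f', ϱ f ≠ f → ϱ f' ≠ f' → f ≠ f' → s f = true → s f' = true →
      ∀ t : ℝ, 0 ≤ t → t ≤ 1 → γ f t ≠ γ f' t := by
    intro f f' hf hf' hne hsf hsf' t ht0 ht1 heq
    have he1 : a f + g t * d f = a f' + g t * d f' := by
      have h1 : γ f t = a f + g t * d f := by show a f + _ * d f = _; rw [if_pos hsf]
      have h2 : γ f' t = a f' + g t * d f' := by show a f' + _ * d f' = _; rw [if_pos hsf']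
      rw [← h1, ← h2, heq]
    have hxne : a f ≠ a f' := by
      intro hc
      exact hne (x.2.1 (by rw [(hxa f hf).1, (hxa f' hf').1, hc]))
    have hyne : b f ≠ b f' := by
      intro hc
      exact hne (y.2.1 (by rw [(hyb f hf).1, (hyb f' hf').1, hc]))
    have hdd : g t * (d f - d f') = a f' - a f := by linear_combination he1
    have hdne : d f - d f' ≠ 0 := by
      intro hc
      rw [hc, mul_zero] at hdd
      exact hxne (by linear_combination hdd)
    have hgw : g t = (a f' - a f) / (d f - d f') := by
      rw [eq_div_iff hdne]; exact hdd
    have htre : t = ((a f' - a f) / (d f - d f')).re := by rw [← hgw, hgre]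
    rcases eq_or_lt_of_le ht0 with ht0' | ht0'
    · apply hxne
      rw [← ht0', hg0] at hgw
      have := (div_eq_zero_iff.mp hgw.symm).resolve_right hdne
      linear_combination - this
    rcases eq_or_lt_of_le ht1 with ht1' | ht1'
    · apply hyne
      rw [ht1', hg1] at hgw
      have h5 : a f' - a f = d f - d f' := by
        field_simp at hgw
        linear_combination - hgw
      rw [hd, hd] at h5
      show b f = b f'
      linear_combination - h5
    · have hsinpos : 0 < Real.sin (Real.pi * t) := by
        apply Real.sin_pos_of_pos_of_lt_pi
        · positivity
        · nlinarith [Real.pi_pos]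
      have him' : δ * Real.sin (Real.pi * t) = ((a f' - a f) / (d f - d f')).im := by
        rw [← hgw, hgim]
      have hδval : δ = ((a f' - a f) / (d f - d f')).im /
          Real.sin (Real.pi * (((a f' - a f) / (d f - d f')).re)) := by
        rw [← htre, eq_div_iff hsinpos.ne']
        linear_combination him'
      apply hδD
      rw [hδval]
      exact Finset.mem_image_of_mem _ (Finset.mem_univ (f, f'))
  -- paths for fixed points
  have hρex : ∀ f, ∃ p : C(unitInterval, OnePoint ℂ),
      ϱ f = f → ((p 0 = x.1 f ∧ p 1 = y.1 f) ∧ ∀ t, p t ∈ P1R) := by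
    intro f
    by_cases hf : ϱ f = f
    · obtain ⟨p, hp⟩ := joinedIn_P1R (x.2.2.1 f hf) (y.2.2.1 f hf)
      exact ⟨p.toContinuousMap, fun _ => ⟨⟨p.source, p.target⟩, hp⟩⟩
    · exact ⟨ContinuousMap.const _ ∞, fun hc => absurd hc hf⟩
  choose ρ hρ using hρex
  let Z : unitInterval → F → OnePoint ℂ := fun t f =>
    if ϱ f = f then ρ f t else ((γ f t.1 : ℂ) : OnePoint ℂ)
  have hZd : ∀ t f, Z t f = if ϱ f = f then ρ f t else ((γ f t.1 : ℂ) : OnePoint ℂ) :=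
    fun _ _ => rfl
  have hZmem : ∀ t, Z t ∈ ConfPlus F ϱ := by
    intro t
    refine ⟨?_, ?_, ?_⟩
    · intro f f' heq
      by_contra hne
      rw [hZd, hZd] at heq
      by_cases hf : ϱ f = f <;> by_cases hf' : ϱ f' = f'
      · exact hne (hsub f f' hf hf')
      · rw [if_pos hf, if_neg hf'] at heq
        have h1 := (hρ f hf).2 t
        rw [heq] at h1
        exact hγim_ne f' hf' t.1 t.2.1 t.2.2 (coe_mem_P1R_iff.mp h1)
      · rw [if_neg hf, if_pos hf'] at heq
        have h1 := (hρ f' hf').2 t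
        rw [← heq] at h1
        exact hγim_ne f hf t.1 t.2.1 t.2.2 (coe_mem_P1R_iff.mp h1)
      · rw [if_neg hf, if_neg hf'] at heq
        have hγeq : γ f t.1 = γ f' t.1 := OnePoint.coe_injective heq
        have hb1 := him_bound f hf t.1 t.2.1 t.2.2
        have hb2 := him_bound f' hf' t.1 t.2.1 t.2.2
        cases hsf : s f <;> cases hsf' : s f'
        · -- both lower: pass to conjugates
          refine hkey (ϱ f) (ϱ f') (nonfix_rho hϱ hf) (nonfix_rho hϱ hf')
            (fun hc => hne (hϱ.injective hc)) ?_ ?_ t.1 t.2.1 t.2.2 ?_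
          · rw [hsρ f hf, hsf]; rfl
          · rw [hsρ f' hf', hsf']; rfl
          · rw [hγconj f hf, hγconj f' hf', hγeq]
        · rw [if_neg (show ¬ s f = true by simp [hsf])] at hb1
          rw [if_pos hsf'] at hb2
          rw [hγeq] at hb1
          linarith
        · rw [if_pos hsf] at hb1
          rw [if_neg (show ¬ s f' = true by simp [hsf'])] at hb2
          rw [hγeq] at hb1
          linarith
        · exact hkey f f' hf hf' hne hsf hsf' t.1 t.2.1 t.2.2 hγeq
    · intro f hf
      rw [hZd, if_pos hf]
      exact (hρ f hf).2 t
    · intro f hf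
      constructor
      · rw [hZd, if_neg hf]
        intro hc
        exact hγim_ne f hf t.1 t.2.1 t.2.2 (coe_mem_P1R_iff.mp hc)
      · rw [hZd, hZd, if_neg hf, if_neg (nonfix_rho hϱ hf)]
        rw [hγconj f hf t.1, conjP_coe]
  have hZ0 : Z 0 = x.1 := by
    funext f
    rw [hZd]
    split_ifs with hf
    · exact ((hρ f hf).1).1
    · show ((γ f (0:ℝ) : ℂ) : OnePoint ℂ) = x.1 f
      rw [hγ0 f, ← (hxa f hf).1]
  have hZ1 : Z 1 = y.1 := by
    funext f
    rw [hZd]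
    split_ifs with hf
    · exact ((hρ f hf).1).2
    · show ((γ f (1:ℝ) : ℂ) : OnePoint ℂ) = y.1 f
      rw [hγ1 f, ← (hyb f hf).1]
  have hZcont : Continuous fun t => Z t := by
    apply continuous_pi
    intro f
    by_cases hf : ϱ f = f
    · have heq1 : (fun t => Z t f) = fun t => ρ f t := by funext t; rw [hZd, if_pos hf]
      rw [heq1]
      exact (ρ f).continuous
    · have heq1 : (fun t => Z t f) = fun t => ((γ f t.1 : ℂ) : OnePoint ℂ) := by
        funext t; rw [hZd, if_neg hf]
      rw [heq1]
      exact OnePoint.continuous_coe.comp ((hγcont f).comp continuous_subtype_val)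
  exact ⟨⟨⟨fun t => ⟨Z t, hZmem t⟩, hZcont.subtype_mk _⟩, Subtype.ext hZ0, Subtype.ext hZ1⟩⟩
/-- if `ϱ` has `l ∈ {0, 1}` fixed points and `k` two-element orbits, then
`Conf⁺_{(F,ϱ)}` has exactly `2^k` connected components. -/
theorem stmt1 (F : Type) [Fintype F] (ϱ : F → F) (hϱ : Function.Involutive ϱ)
    (k l : ℕ) (hl : Nat.card {f : F // ϱ f = f} = l)
    (hk : Nat.card {f : F // ϱ f ≠ f} = 2 * k) (h01 : l = 0 ∨ l = 1) :
    Nat.card (ConnectedComponents ↥(ConfPlus F ϱ)) = 2 ^ k := by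
  classical
  have hsub : ∀ f g : F, ϱ f = f → ϱ g = g → f = g := by
    intro f g hf hg
    have hc1 : Fintype.card {f : F // ϱ f = f} ≤ 1 := by
      rw [← Nat.card_eq_fintype_card, hl]
      rcases h01 with h | h <;> omega
    have := Fintype.card_le_one_iff.mp hc1 ⟨f, hf⟩ ⟨g, hg⟩
    exact congrArg Subtype.val this
  have hlift : ∀ x y : ↥(ConfPlus F ϱ),
      connectedComponent x = connectedComponent y → sgnPat F ϱ x = sgnPat F ϱ y := by
    intro x y hxy
    apply Subtype.ext
    exact (isLocallyConstant_sgnMap F ϱ).apply_eq_of_isPreconnected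
      isPreconnected_connectedComponent mem_connectedComponent
      (hxy ▸ (mem_connectedComponent : y ∈ connectedComponent y))
  let φ : ConnectedComponents ↥(ConfPlus F ϱ) → Pat F ϱ :=
    Quotient.lift (sgnPat F ϱ) hlift
  have hbij : Function.Bijective φ := by
    constructor
    · rintro ⟨x⟩ ⟨y⟩ hxy
      have hs : sgnMap F ϱ x = sgnMap F ϱ y := congrArg Subtype.val hxy
      have hj := joined_of_sgn_eq F ϱ hϱ hsub x y hs
      have hmem : y ∈ pathComponent x := hj
      have hmem2 : y ∈ connectedComponent x := pathComponent_subset_component x hmem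
      exact Quot.sound (show connectedComponent x = connectedComponent y from connectedComponent_eq hmem2)
    · intro p
      obtain ⟨x, hx⟩ := exists_conf F ϱ hϱ hsub p
      exact ⟨ConnectedComponents.mk x, hx⟩
  rw [Nat.card_eq_of_bijective φ hbij]
  exact card_pat F ϱ hϱ k hk
end
end

section
/- Let F be a finite set with an involution ϱ, with l fixed points and k two-element orbits, and assume 2k + l ≥ 3. Let e : Conf⁺_{(F,ϱ)} → Conf⁺_{(F,ϱ)} be the homeomorphism (z_f)_{f∈F} ↦ (−z_f)_{f∈F} (with −∞ = ∞). Then e maps every connected component of Conf⁺_{(F,ϱ)} onto a different connected component: for every x ∈ Conf⁺_{(F,ϱ)}, e(x) does not lie in the connected component of x. (Consequently the quotient map Conf⁺_{(F,ϱ)}/SL₂(ℝ) → (Conf⁺_{(F,ϱ)}/e)/SL₂(ℝ) is a trivial double covering.) -/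
open scoped Classical

noncomputable section

section Aux

open Complex Filter Topology Set

/-- the Cayley map to the circle -/
def Csph : OnePoint ℂ → ℂ :=
  fun z => Option.rec (motive := fun _ => ℂ) 1 (fun w => (w - I) / (w + I)) z

lemma Csph_coe (w : ℂ) : Csph (w : OnePoint ℂ) = (w - I) / (w + I) := rfl
lemma Csph_infty : Csph OnePoint.infty = 1 := rfl
lemma negP_coe (w : ℂ) : negP (w : OnePoint ℂ) = ((-w : ℂ) : OnePoint ℂ) := rfl
lemma negP_infty : negP OnePoint.infty = OnePoint.infty := rfl

lemma ofReal_add_I_ne (r : ℝ) : (r : ℂ) + I ≠ 0 := by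
  intro h
  have := congrArg Complex.im h
  simp at this

lemma ofReal_sub_I_ne (r : ℝ) : (r : ℂ) - I ≠ 0 := by
  intro h
  have := congrArg Complex.im h
  simp at this

lemma csph_contAt_coe {w : ℂ} (h : w + I ≠ 0) : ContinuousAt Csph (w : OnePoint ℂ) := by
  rw [OnePoint.continuousAt_coe]
  have heq : (Csph ∘ ((↑) : ℂ → OnePoint ℂ)) = fun z : ℂ => (z - I) / (z + I) := rfl
  rw [heq]
  exact ContinuousAt.div (continuousAt_id.sub continuousAt_const)
    (continuousAt_id.add continuousAt_const) h

lemma csph_contAt_infty : ContinuousAt Csph OnePoint.infty := by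
  rw [OnePoint.continuousAt_infty', Filter.coclosedCompact_eq_cocompact]
  have hfun : (Csph ∘ ((↑) : ℂ → OnePoint ℂ)) = fun z : ℂ => (z - I) / (z + I) := rfl
  rw [hfun, Csph_infty]
  rw [tendsto_iff_norm_sub_tendsto_zero]
  have hnorm : Tendsto (fun w : ℂ => ‖w + I‖) (cocompact ℂ) atTop := by
    apply tendsto_atTop_mono (f := fun w : ℂ => ‖w‖ - 1)
    · intro w
      have h1 := norm_add_le (w + I) (-I)
      simp only [add_neg_cancel_right, norm_neg, Complex.norm_I] at h1
      linarith
    · simpa [sub_eq_add_neg] using tendsto_atTop_add_const_right (cocompact ℂ) (-1) tendsto_norm_cocompact_atTop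
  have h2 : Tendsto (fun w : ℂ => 2 / ‖w + I‖) (cocompact ℂ) (𝓝 0) :=
    tendsto_const_nhds.div_atTop hnorm
  apply squeeze_zero' (Eventually.of_forall fun w => norm_nonneg _) _ h2
  have hev : {w : ℂ | w ≠ -I} ∈ cocompact ℂ := by
    rw [mem_cocompact]
    exact ⟨{-I}, isCompact_singleton, fun w hw => hw⟩
  filter_upwards [hev] with w hw
  have hden : w + I ≠ 0 := fun h => hw (by linear_combination h)
  have : (w - I) / (w + I) - 1 = (-2 * I) / (w + I) := by
    field_simp
    ring
  rw [this, norm_div]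
  have : ‖(-2 : ℂ) * I‖ = 2 := by simp
  rw [this]

lemma csph_contAt_P1R {z : OnePoint ℂ} (hz : z ∈ P1R) : ContinuousAt Csph z := by
  rcases hz with rfl | ⟨r, rfl⟩
  · exact csph_contAt_infty
  · exact csph_contAt_coe (ofReal_add_I_ne r)

lemma csph_norm {z : OnePoint ℂ} (hz : z ∈ P1R) : ‖Csph z‖ = 1 := by
  rcases hz with rfl | ⟨r, rfl⟩
  · simp [Csph_infty]
  · rw [Csph_coe, norm_div]
    have hc : (r : ℂ) - I = (starRingEnd ℂ) ((r : ℂ) + I) := by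
      rw [map_add, Complex.conj_ofReal, Complex.conj_I]; ring
    rw [hc, RCLike.norm_conj]
    exact div_self (norm_ne_zero_iff.mpr (ofReal_add_I_ne r))

lemma csph_inj : ∀ z₁ ∈ P1R, ∀ z₂ ∈ P1R, Csph z₁ = Csph z₂ → z₁ = z₂ := by
  have hir : ∀ r : ℝ, Csph ((r : ℂ) : OnePoint ℂ) ≠ 1 := by
    intro r h
    rw [Csph_coe, div_eq_one_iff_eq (ofReal_add_I_ne r)] at h
    have := congrArg Complex.im h; simp at this; linarith
  rintro z₁ (rfl | ⟨r, rfl⟩) z₂ (rfl | ⟨s, rfl⟩) h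
  · rfl
  · exact absurd (by rw [← h, Csph_infty]) (hir s)
  · exact absurd (by rw [h, Csph_infty]) (hir r)
  · rw [Csph_coe, Csph_coe,
      div_eq_div_iff (ofReal_add_I_ne r) (ofReal_add_I_ne s)] at h
    have h2 : ((r : ℂ) - s) * (2 * I) = 0 := by linear_combination h
    rcases mul_eq_zero.mp h2 with h3 | h3
    · have : (r : ℂ) = s := by linear_combination h3
      have : r = s := by exact_mod_cast this
      rw [this]
    · exact absurd h3 (by simp [Complex.I_ne_zero])

lemma csph_negP {z : OnePoint ℂ} (hz : z ∈ P1R) :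
    Csph (negP z) = (starRingEnd ℂ) (Csph z) := by
  rcases hz with rfl | ⟨r, rfl⟩
  · show (1 : ℂ) = (starRingEnd ℂ) 1; simp
  · show Csph (((-r : ℂ)) : OnePoint ℂ) = _
    rw [Csph_coe, Csph_coe, map_div₀, map_sub, map_add, Complex.conj_ofReal, Complex.conj_I]
    rw [div_eq_div_iff]
    · ring
    · intro h; have := congrArg Complex.im h; simp at this
    · exact ofReal_sub_I_ne r

/-- twice the signed area of the triangle (u,v,w) -/
def cross (u v w : ℂ) : ℝ :=
  (v.re - u.re) * (w.im - u.im) - (v.im - u.im) * (w.re - u.re)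

lemma cross_conj (u v w : ℂ) :
    cross ((starRingEnd ℂ) u) ((starRingEnd ℂ) v) ((starRingEnd ℂ) w) = -cross u v w := by
  simp [cross, Complex.conj_re, Complex.conj_im]; ring

lemma continuous_cross : Continuous (fun p : ℂ × ℂ × ℂ => cross p.1 p.2.1 p.2.2) := by
  unfold cross; fun_prop

lemma circle_three {a b c d p q : ℝ} (h1 : a^2 + b^2 = 1) (h2 : c^2 + d^2 = 1)
    (h3 : p^2 + q^2 = 1) (huv : ¬(a = c ∧ b = d)) (huw : ¬(a = p ∧ b = q))
    (hvw : ¬(c = p ∧ d = q)) (hc : (c - a) * (q - b) - (d - b) * (p - a) = 0) : False := by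
  obtain ⟨t, hP, hQ⟩ : ∃ t : ℝ, p - a = t * (c - a) ∧ q - b = t * (d - b) := by
    by_cases hX : c - a = 0
    · have hY : d - b ≠ 0 := fun h => huv ⟨by linarith, by linarith⟩
      refine ⟨(q - b) / (d - b), ?_, by field_simp⟩
      have hpa : (d - b) * (p - a) = 0 := by rw [hX] at hc; linarith
      have : p - a = 0 := by
        rcases mul_eq_zero.mp hpa with h | h
        · exact absurd h hY
        · exact h
      rw [this, hX]; ring
    · refine ⟨(p - a) / (c - a), by field_simp, ?_⟩
      field_simp
      linear_combination hc
  have hp : p = a + t * (c - a) := by linarith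
  have hq : q = b + t * (d - b) := by linarith
  subst hp hq
  have key : t * (t - 1) * ((c - a)^2 + (d - b)^2) = 0 := by
    linear_combination h3 + (t - 1) * h1 - t * h2
  have hS : (c - a)^2 + (d - b)^2 ≠ 0 := by
    intro h
    have hca : (c - a)^2 = 0 :=
      le_antisymm (by linarith [sq_nonneg (d - b)]) (sq_nonneg _)
    have hdb : (d - b)^2 = 0 :=
      le_antisymm (by linarith [sq_nonneg (c - a)]) (sq_nonneg _)
    have hca' : c - a = 0 := by
      have := sq_eq_zero_iff.mp hca; linarith
    have hdb' : d - b = 0 := by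
      have := sq_eq_zero_iff.mp hdb; linarith
    exact huv ⟨by linarith, by linarith⟩
  rcases mul_eq_zero.mp key with h | h
  · rcases mul_eq_zero.mp h with h | h
    · exact huw ⟨by rw [h]; ring, by rw [h]; ring⟩
    · have ht : t = 1 := by linarith
      exact hvw ⟨by rw [ht]; ring, by rw [ht]; ring⟩
  · exact hS h

lemma norm_one_sq {z : ℂ} (h : ‖z‖ = 1) : z.re^2 + z.im^2 = 1 := by
  have h2 := Complex.sq_norm z
  rw [Complex.normSq_apply] at h2
  rw [h] at h2
  linear_combination -h2

lemma cross_ne_zero {u v w : ℂ} (hu : ‖u‖ = 1) (hv : ‖v‖ = 1) (hw : ‖w‖ = 1)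
    (h1 : u ≠ v) (h2 : u ≠ w) (h3 : v ≠ w) : cross u v w ≠ 0 := by
  intro hc
  apply circle_three (norm_one_sq hu) (norm_one_sq hv) (norm_one_sq hw)
    (fun h => h1 (Complex.ext h.1 h.2)) (fun h => h2 (Complex.ext h.1 h.2))
    (fun h => h3 (Complex.ext h.1 h.2))
  unfold cross at hc; linarith

lemma negP_negP (z : OnePoint ℂ) : negP (negP z) = z := by
  cases z with
  | infty => rfl
  | coe w => show ((- -w : ℂ) : OnePoint ℂ) = _; rw [neg_neg]

lemma negP_injective : Function.Injective negP :=
  Option.map_injective neg_injective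

lemma negP_mem_P1R {z : OnePoint ℂ} (h : z ∈ P1R) : negP z ∈ P1R := by
  rcases h with rfl | ⟨r, rfl⟩
  · exact Set.mem_insert _ _
  · right
    exact ⟨-r, by push_cast; rfl⟩

lemma negP_mem_P1R_iff {z : OnePoint ℂ} : negP z ∈ P1R ↔ z ∈ P1R :=
  ⟨fun h => by rw [← negP_negP z]; exact negP_mem_P1R h, negP_mem_P1R⟩

lemma conjP_negP (z : OnePoint ℂ) : conjP (negP z) = negP (conjP z) := by
  cases z with
  | infty => rfl
  | coe w =>
    show ((((starRingEnd ℂ) (-w)) : ℂ) : OnePoint ℂ) = ((-(starRingEnd ℂ) w : ℂ) : OnePoint ℂ)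
    rw [map_neg]

lemma negP_mem_ConfPlus {F : Type} {ϱ : F → F} {z : F → OnePoint ℂ}
    (hz : z ∈ ConfPlus F ϱ) : (fun f => negP (z f)) ∈ ConfPlus F ϱ := by
  obtain ⟨hinj, hfix, hmov⟩ := hz
  refine ⟨fun a b hab => hinj (negP_injective hab), fun f hf => negP_mem_P1R (hfix f hf),
    fun f hf => ⟨fun h => (hmov f hf).1 (negP_mem_P1R_iff.mp h), ?_⟩⟩
  show negP (z (ϱ f)) = conjP (negP (z f))
  rw [(hmov f hf).2, conjP_negP]

/-- imaginary part at finite points, junk value 0 at `∞` -/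
def imP : OnePoint ℂ → ℝ :=
  fun z => Option.rec (motive := fun _ => ℝ) 0 Complex.im z

lemma imP_coe (w : ℂ) : imP (w : OnePoint ℂ) = w.im := rfl

lemma not_mem_P1R {z : OnePoint ℂ} (h : z ∉ P1R) : ∃ w : ℂ, z = (w : OnePoint ℂ) ∧ w.im ≠ 0 := by
  cases z with
  | infty => exact absurd (Set.mem_insert _ _) h
  | coe w =>
    refine ⟨w, rfl, fun him => h ?_⟩
    right
    have hwre : w = ((w.re : ℝ) : ℂ) := Complex.ext (Complex.ofReal_re w.re).symm (by simp [him])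
    exact ⟨w.re, by rw [← hwre]⟩


end Aux

open Complex Filter Topology Set

/-- if `2k + l ≥ 3`, the involution `e : (z_f) ↦ (-z_f)` maps every
connected component of `Conf⁺_{(F,ϱ)}` onto a different one: `e x` lies in
`Conf⁺_{(F,ϱ)}` but not in the connected component of `x`. -/
theorem stmt5 (F : Type) [Fintype F] (ϱ : F → F) (hϱ : Function.Involutive ϱ)
    (k l : ℕ) (hl : Nat.card {f : F // ϱ f = f} = l)
    (hk : Nat.card {f : F // ϱ f ≠ f} = 2 * k) (h3 : 3 ≤ 2 * k + l)
    (x : ↥(ConfPlus F ϱ)) :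
    ∃ hm : (fun f => negP (x.1 f)) ∈ ConfPlus F ϱ,
      (⟨fun f => negP (x.1 f), hm⟩ : ↥(ConfPlus F ϱ)) ∉ connectedComponent x := by
  have hm : (fun f => negP (x.1 f)) ∈ ConfPlus F ϱ := negP_mem_ConfPlus x.2
  refine ⟨hm, ?_⟩
  intro hcc
  set ex : ↥(ConfPlus F ϱ) := ⟨fun f => negP (x.1 f), hm⟩ with hex
  -- construct a continuous nonvanishing invariant that flips sign under negation
  have hinv : ∃ φ : ↥(ConfPlus F ϱ) → ℝ, Continuous φ ∧ (∀ y, φ y ≠ 0) ∧ φ ex = -φ x := by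
    by_cases hA : ∀ f, ϱ f = f
    · -- all points real: use orientation of a triple
      have hkey : 3 ≤ Fintype.card F := by
        have hempty : IsEmpty {f : F // ϱ f ≠ f} := ⟨fun ⟨f, hf⟩ => hf (hA f)⟩
        have h0 : Nat.card {f : F // ϱ f ≠ f} = 0 := Nat.card_of_isEmpty
        have hk0 : k = 0 := by omega
        have hcard : Fintype.card F = l := by
          rw [← hl, ← Nat.card_eq_fintype_card]
          exact (Nat.card_congr (Equiv.subtypeUnivEquiv hA)).symm
        omega
      obtain ⟨f₁⟩ : Nonempty F := Fintype.card_pos_iff.mp (by omega)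
      obtain ⟨f₂, hf21⟩ := Fintype.exists_ne_of_one_lt_card (by omega) f₁
      obtain ⟨f₃, hf3⟩ : ∃ f₃, f₃ ∈ Finset.univ \ ({f₁, f₂} : Finset F) := by
        apply Finset.card_pos.mp
        have h1 : ({f₁, f₂} : Finset F).card ≤ 2 := Finset.card_le_two
        have h2 := Finset.le_card_sdiff ({f₁, f₂} : Finset F) Finset.univ
        rw [Finset.card_univ] at h2
        omega
      rw [Finset.mem_sdiff, Finset.mem_insert, Finset.mem_singleton] at hf3
      push_neg at hf3
      obtain ⟨-, hf31, hf32⟩ := hf3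
      have hmem : ∀ (y : ↥(ConfPlus F ϱ)) (g : F), y.1 g ∈ P1R := fun y g => y.2.2.1 g (hA g)
      have hcont : ∀ g : F, Continuous (fun y : ↥(ConfPlus F ϱ) => Csph (y.1 g)) := by
        intro g
        rw [continuous_iff_continuousAt]
        intro y
        have hev : Continuous (fun y : ↥(ConfPlus F ϱ) => y.1 g) :=
          (continuous_apply g).comp continuous_subtype_val
        exact ContinuousAt.comp (g := Csph) (f := fun y : ↥(ConfPlus F ϱ) => y.1 g)
          (csph_contAt_P1R (hmem y g)) hev.continuousAt
      refine ⟨fun y => cross (Csph (y.1 f₁)) (Csph (y.1 f₂)) (Csph (y.1 f₃)), ?_, ?_, ?_⟩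
      · exact continuous_cross.comp
          ((hcont f₁).prodMk ((hcont f₂).prodMk (hcont f₃)))
      · intro y
        have hne : ∀ g g' : F, g ≠ g' → Csph (y.1 g) ≠ Csph (y.1 g') := by
          intro g g' hgg' h
          exact hgg' (y.2.1 (csph_inj _ (hmem y g) _ (hmem y g') h))
        exact cross_ne_zero (csph_norm (hmem y f₁)) (csph_norm (hmem y f₂))
          (csph_norm (hmem y f₃)) (hne f₁ f₂ (Ne.symm hf21)) (hne f₁ f₃ (Ne.symm hf31))
          (hne f₂ f₃ (Ne.symm hf32))
      · show cross (Csph (negP (x.1 f₁))) (Csph (negP (x.1 f₂))) (Csph (negP (x.1 f₃))) = _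
        rw [csph_negP (hmem x f₁), csph_negP (hmem x f₂), csph_negP (hmem x f₃), cross_conj]
    · -- some non-real point: use the sign of its imaginary part
      push_neg at hA
      obtain ⟨f, hf⟩ := hA
      have hnr : ∀ y : ↥(ConfPlus F ϱ), y.1 f ∉ P1R := fun y => (y.2.2.2 f hf).1
      refine ⟨fun y => imP (y.1 f), ?_, ?_, ?_⟩
      · rw [continuous_iff_continuousAt]
        intro y
        obtain ⟨w, hw, -⟩ := not_mem_P1R (hnr y)
        have h1 : ContinuousAt imP (y.1 f) := by
          rw [hw, OnePoint.continuousAt_coe]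
          exact Complex.continuous_im.continuousAt
        have hev : Continuous (fun y : ↥(ConfPlus F ϱ) => y.1 f) :=
          (continuous_apply f).comp continuous_subtype_val
        exact ContinuousAt.comp (g := imP) (f := fun y : ↥(ConfPlus F ϱ) => y.1 f)
          h1 hev.continuousAt
      · intro y
        obtain ⟨w, hw, hwim⟩ := not_mem_P1R (hnr y)
        show imP (y.1 f) ≠ 0
        rw [hw, imP_coe]
        exact hwim
      · obtain ⟨w, hw, -⟩ := not_mem_P1R (hnr x)
        show imP (negP (x.1 f)) = -imP (x.1 f)
        rw [hw]
        show imP (((-w : ℂ)) : OnePoint ℂ) = -imP ((w : ℂ) : OnePoint ℂ)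
        rw [imP_coe, imP_coe, Complex.neg_im]
  obtain ⟨φ, hc, hne0, hflip⟩ := hinv
  have hpre : IsPreconnected (connectedComponent x) := isPreconnected_connectedComponent
  have hxmem : x ∈ connectedComponent x := mem_connectedComponent
  rcases lt_or_gt_of_ne (hne0 x) with hneg | hpos
  · have h0 : (0 : ℝ) ∈ Icc (φ x) (φ ex) := ⟨hneg.le, by rw [hflip]; linarith⟩
    obtain ⟨y, -, hy0⟩ := hpre.intermediate_value hxmem hcc hc.continuousOn h0
    exact hne0 y hy0
  · have h0 : (0 : ℝ) ∈ Icc (φ ex) (φ x) := ⟨by rw [hflip]; linarith, hpos.le⟩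
    obtain ⟨y, -, hy0⟩ := hpre.intermediate_value hcc hxmem hc.continuousOn h0
    exact hne0 y hy0
end
end

section
/- Let F be a finite set with a fixed-point-free involution ϱ and |F| = 2k with k ≥ 1. Then the configuration space Conf^∅_{(F,ϱ)} is path-connected (hence its quotient by the SU(2)-action is connected). -/
open scoped Classical

noncomputable section

section Aux

open OnePoint Set Filter

lemma antip_infty : antip ∞ = ((0 : ℂ) : OnePoint ℂ) := rfl

lemma antip_coe (w : ℂ) : antip (w : OnePoint ℂ) =
    (if w = 0 then ∞ else (((-1) / (starRingEnd ℂ) w : ℂ) : OnePoint ℂ)) := rfl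

lemma antip_coe_ne (w : ℂ) (hw : w ≠ 0) :
    antip (w : OnePoint ℂ) = (((-1) / (starRingEnd ℂ) w : ℂ) : OnePoint ℂ) := by
  rw [antip_coe, if_neg hw]

lemma antip_antip (z : OnePoint ℂ) : antip (antip z) = z := by
  cases z with
  | infty =>
    show antip ((0 : ℂ) : OnePoint ℂ) = ∞
    rw [antip_coe, if_pos rfl]
  | coe w =>
    by_cases hw : w = 0
    · subst hw
      rw [antip_coe, if_pos rfl, antip_infty]
    · rw [antip_coe_ne w hw]
      have h2 : ((-1) / (starRingEnd ℂ) w : ℂ) ≠ 0 := by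
        simp [div_eq_zero_iff, hw]
      rw [antip_coe_ne _ h2]
      congr 1
      rw [map_div₀, map_neg, map_one, Complex.conj_conj]
      field_simp

lemma antip_injective : Function.Injective antip :=
  Function.Involutive.injective antip_antip

lemma antip_ne_self (z : OnePoint ℂ) : antip z ≠ z := by
  cases z with
  | infty =>
    rw [antip_infty]; exact coe_ne_infty 0
  | coe w =>
    by_cases hw : w = 0
    · subst hw; rw [antip_coe, if_pos rfl]; exact infty_ne_coe 0
    · rw [antip_coe_ne w hw]
      intro h
      rw [coe_eq_coe] at h
      have hcw : (starRingEnd ℂ) w ≠ 0 := by simpa using hw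
      rw [div_eq_iff hcw] at h
      have h2 : (-1 : ℂ) = w * (starRingEnd ℂ) w := h
      rw [Complex.mul_conj] at h2
      have := Complex.normSq_nonneg w
      have h3 : (-1 : ℝ) = Complex.normSq w := by
        exact_mod_cast h2
      linarith

lemma continuous_antip : Continuous antip := by
  rw [continuous_iff_continuousAt]
  intro z
  cases z with
  | infty =>
    rw [OnePoint.continuousAt_infty']
    rw [Filter.coclosedCompact_eq_cocompact, ← Metric.cobounded_eq_cocompact]
    have hev : ∀ᶠ w : ℂ in Bornology.cobounded ℂ,
        ((((-1) / (starRingEnd ℂ) w : ℂ)) : OnePoint ℂ) = (antip ∘ (↑)) w := by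
      have h0 : ({0} : Set ℂ)ᶜ ∈ Bornology.cobounded ℂ :=
        Bornology.isBounded_def.mp Bornology.isBounded_singleton
      filter_upwards [h0] with w hw
      simp only [Function.comp_apply, antip_coe_ne w (Set.mem_compl_singleton_iff.mp hw)]
    refine Filter.Tendsto.congr' hev ?_
    rw [antip_infty]
    refine (OnePoint.continuous_coe.tendsto _).comp ?_
    rw [tendsto_zero_iff_norm_tendsto_zero]
    have h1 : Filter.Tendsto (fun w : ℂ => ‖w‖⁻¹) (Bornology.cobounded ℂ) (nhds 0) :=
      tendsto_inv_atTop_zero.comp tendsto_norm_cobounded_atTop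
    refine h1.congr (fun w => ?_)
    rw [norm_div, norm_neg, norm_one, RCLike.norm_conj, one_div]
  | coe w =>
    rw [OnePoint.continuousAt_coe]
    by_cases hw : w = 0
    · subst hw
      have hval : (antip ∘ ((↑) : ℂ → OnePoint ℂ)) 0 = ∞ := by
        simp [Function.comp_apply, antip_coe]
      rw [ContinuousAt, hval, ← nhdsNE_sup_pure, Filter.tendsto_sup]
      constructor
      · have hev : ∀ᶠ w : ℂ in nhdsWithin 0 {0}ᶜ,
            ((((-1) / (starRingEnd ℂ) w : ℂ)) : OnePoint ℂ) = (antip ∘ (↑)) w := by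
          filter_upwards [self_mem_nhdsWithin] with w hw
          simp only [Function.comp_apply, antip_coe_ne w hw]
        refine Filter.Tendsto.congr' hev ?_
        have h2 : Filter.Tendsto (fun w : ℂ => (-1) / (starRingEnd ℂ) w)
            (nhdsWithin 0 {0}ᶜ) (Bornology.cobounded ℂ) := by
          rw [← tendsto_norm_atTop_iff_cobounded]
          have h3 : Filter.Tendsto (fun w : ℂ => ‖w‖⁻¹) (nhdsWithin 0 {0}ᶜ) Filter.atTop := by
            have hnorm : Filter.Tendsto (fun w : ℂ => ‖w‖) (nhdsWithin 0 {0}ᶜ)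
                (nhdsWithin 0 (Set.Ioi 0)) := by
              rw [tendsto_nhdsWithin_iff]
              constructor
              · have := (continuous_norm.tendsto (0 : ℂ)).mono_left
                  (nhdsWithin_le_nhds (s := ({0}ᶜ : Set ℂ)))
                simpa using this
              · filter_upwards [self_mem_nhdsWithin] with w hw
                exact norm_pos_iff.mpr (Set.mem_compl_singleton_iff.mp hw)
            exact tendsto_inv_nhdsGT_zero.comp hnorm
          refine h3.congr (fun w => ?_)
          rw [norm_div, norm_neg, norm_one, RCLike.norm_conj, one_div]
        have h4 := OnePoint.tendsto_coe_infty (X := ℂ)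
        rw [Filter.coclosedCompact_eq_cocompact, ← Metric.cobounded_eq_cocompact] at h4
        exact h4.comp h2
      · have : (antip ∘ ((↑) : ℂ → OnePoint ℂ)) 0 = ∞ := hval
        rw [← this]
        exact tendsto_pure_nhds _ 0
    · have hcont : ContinuousAt (fun w : ℂ =>
          ((((-1) / (starRingEnd ℂ) w : ℂ)) : OnePoint ℂ)) w := by
        refine (OnePoint.continuous_coe.continuousAt).comp ?_
        exact (continuousAt_const.div (Complex.continuous_conj.continuousAt)
          (by simpa using hw))
      refine hcont.congr ?_
      have h0 : {w' : ℂ | w' ≠ 0} ∈ nhds w := isOpen_ne.mem_nhds hw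
      filter_upwards [h0] with w' hw'
      exact (antip_coe_ne w' hw').symm

lemma joinedIn_image_antip {S : Set (OnePoint ℂ)} {p q : OnePoint ℂ} (h : JoinedIn S p q) :
    JoinedIn (antip '' S) (antip p) (antip q) := by
  obtain ⟨γ, hγ⟩ := h
  exact ⟨γ.map continuous_antip, fun t => ⟨γ t, hγ t, rfl⟩⟩

lemma joinedIn_compl_finite_coe {T : Set (OnePoint ℂ)} (hT : T.Finite) {p q : ℂ}
    (hp : (p : OnePoint ℂ) ∉ T) (hq : (q : OnePoint ℂ) ∉ T) :
    JoinedIn Tᶜ (p : OnePoint ℂ) (q : OnePoint ℂ) := by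
  have hT' : (((↑) : ℂ → OnePoint ℂ) ⁻¹' T).Finite :=
    hT.preimage (OnePoint.coe_injective.injOn)
  have hrank : 1 < Module.rank ℝ ℂ := by
    rw [Complex.rank_real_complex]; norm_num
  have hpc := hT'.countable.isPathConnected_compl_of_one_lt_rank hrank
  obtain ⟨γ, hγ⟩ := hpc.joinedIn p (by simpa using hp) q (by simpa using hq)
  refine ⟨γ.map OnePoint.continuous_coe, fun t => ?_⟩
  have := hγ t
  simp only [Set.mem_compl_iff, Set.mem_preimage] at this
  simpa using this

lemma joinedIn_compl_finite_infty {T : Set (OnePoint ℂ)} (hT : T.Finite) {y : ℂ}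
    (hp : ∞ ∉ T) (hq : (y : OnePoint ℂ) ∉ T) :
    JoinedIn Tᶜ ∞ (y : OnePoint ℂ) := by
  have main : ∀ y : ℂ, y ≠ 0 → (y : OnePoint ℂ) ∉ T → JoinedIn Tᶜ ∞ (y : OnePoint ℂ) := by
    intro y hy0 hy
    have hT2 : (antip '' T).Finite := hT.image _
    have h0 : ((0 : ℂ) : OnePoint ℂ) ∉ antip '' T := by
      rintro ⟨z, hz, hz'⟩
      rw [show ((0 : ℂ) : OnePoint ℂ) = antip ∞ from rfl] at hz'
      exact hp (antip_injective hz' ▸ hz)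
    have h1 : (((-1) / (starRingEnd ℂ) y : ℂ) : OnePoint ℂ) ∉ antip '' T := by
      rintro ⟨z, hz, hz'⟩
      rw [← antip_coe_ne y hy0] at hz'
      exact hy (antip_injective hz' ▸ hz)
    have hj := joinedIn_compl_finite_coe hT2 h0 h1
    have hj2 := joinedIn_image_antip hj
    have him : antip '' (antip '' T)ᶜ ⊆ Tᶜ := by
      rintro x ⟨z, hz, rfl⟩ hx
      exact hz ⟨antip z, hx, antip_antip z⟩
    have e0 : antip ((0 : ℂ) : OnePoint ℂ) = ∞ := by rw [antip_coe, if_pos rfl]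
    have e1 : antip (((-1) / (starRingEnd ℂ) y : ℂ) : OnePoint ℂ) = (y : OnePoint ℂ) := by
      rw [← antip_coe_ne y hy0, antip_antip]
    rw [e0, e1] at hj2
    exact hj2.mono him
  by_cases hy0 : y = 0
  · subst hy0
    have hbad : ({w : ℂ | (w : OnePoint ℂ) ∈ T} ∪ {0}).Finite :=
      (hT.preimage (OnePoint.coe_injective.injOn)).union (Set.finite_singleton 0)
    obtain ⟨c, hc⟩ := hbad.infinite_compl.nonempty
    simp only [Set.mem_compl_iff, Set.mem_union, Set.mem_setOf_eq, Set.mem_singleton_iff,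
      not_or] at hc
    exact (main c hc.2 hc.1).trans (joinedIn_compl_finite_coe hT hc.1 hq)
  · exact main y hy0 hq

lemma joinedIn_compl_finite {T : Set (OnePoint ℂ)} (hT : T.Finite) {p q : OnePoint ℂ}
    (hp : p ∉ T) (hq : q ∉ T) : JoinedIn Tᶜ p q := by
  cases p with
  | infty =>
    cases q with
    | infty => exact JoinedIn.refl hp
    | coe y => exact joinedIn_compl_finite_infty hT hp hq
  | coe x =>
    cases q with
    | infty => exact (joinedIn_compl_finite_infty hT hq hp).symm
    | coe y => exact joinedIn_compl_finite_coe hT hp hq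

lemma move_pair {F : Type} [Fintype F] {ϱ : F → F} (hϱ : Function.Involutive ϱ)
    (hfree : ∀ f, ϱ f ≠ f) {z : F → OnePoint ℂ} (hz : z ∈ ConfEmpty F ϱ)
    (f0 : F) (v : OnePoint ℂ)
    (hv : ∀ f, f ≠ f0 → f ≠ ϱ f0 → v ≠ z f) :
    JoinedIn (ConfEmpty F ϱ) z
      (fun f => if f = f0 then v else if f = ϱ f0 then antip v else z f) := by
  obtain ⟨hinj, hrel⟩ := hz
  set B : Set (OnePoint ℂ) := z '' {f | f ≠ f0 ∧ f ≠ ϱ f0} with hB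
  have hBfin : B.Finite := (Set.toFinite _).image z
  have hBantip : ∀ x ∈ B, antip x ∈ B := by
    rintro x ⟨f, ⟨h1, h2⟩, rfl⟩
    refine ⟨ϱ f, ⟨?_, ?_⟩, (hrel f).symm ▸ rfl⟩
    · intro h; exact h2 (by rw [← h, hϱ f])
    · intro h; exact h1 (hϱ.injective h)
  have hz0 : z f0 ∉ B := by
    rintro ⟨f, ⟨h1, _⟩, he⟩
    exact h1 (hinj he)
  have hvB : v ∉ B := by
    rintro ⟨f, ⟨h1, h2⟩, he⟩
    exact hv f h1 h2 he.symm
  obtain ⟨γ, hγ⟩ := joinedIn_compl_finite hBfin hz0 hvB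
  have hγB : ∀ t, γ t ∉ B := fun t => hγ t
  -- the path of configurations
  refine ⟨⟨⟨fun t f => if f = f0 then γ t else if f = ϱ f0 then antip (γ t) else z f, ?_⟩,
      ?_, ?_⟩, ?_⟩
  · refine continuous_pi fun f => ?_
    by_cases h1 : f = f0
    · simp only [if_pos h1]; exact γ.continuous
    · by_cases h2 : f = ϱ f0
      · simp only [if_neg h1, if_pos h2]
        exact continuous_antip.comp γ.continuous
      · simp only [if_neg h1, if_neg h2]; exact continuous_const
  · funext f
    by_cases h1 : f = f0
    · simp only [if_pos h1, γ.source]; rw [h1]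
    · by_cases h2 : f = ϱ f0
      · simp only [if_neg h1, if_pos h2, γ.source]
        rw [h2, hrel f0]
      · simp only [if_neg h1, if_neg h2]
  · funext f
    by_cases h1 : f = f0
    · simp only [if_pos h1, γ.target]
    · by_cases h2 : f = ϱ f0
      · simp only [if_neg h1, if_pos h2, γ.target]
      · simp only [if_neg h1, if_neg h2]
  · intro t
    simp only [Path.coe_mk_mk]
    constructor
    · -- injectivity
      intro a b hab
      by_cases ha1 : a = f0
      · by_cases hb1 : b = f0
        · rw [ha1, hb1]
        · by_cases hb2 : b = ϱ f0
          · simp only [if_pos ha1, if_neg hb1, if_pos hb2] at hab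
            exact absurd hab.symm (antip_ne_self (γ t))
          · simp only [if_pos ha1, if_neg hb1, if_neg hb2] at hab
            exact absurd (⟨b, ⟨hb1, hb2⟩, hab.symm⟩ : γ t ∈ B) (hγB t)
      · by_cases ha2 : a = ϱ f0
        · by_cases hb1 : b = f0
          · simp only [if_neg ha1, if_pos ha2, if_pos hb1] at hab
            exact absurd hab (antip_ne_self (γ t))
          · by_cases hb2 : b = ϱ f0
            · rw [ha2, hb2]
            · simp only [if_neg ha1, if_pos ha2, if_neg hb1, if_neg hb2] at hab
              have : γ t = antip (z b) := by
                rw [← antip_antip (γ t), hab]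
              rw [← hrel b] at this
              have hb3 : ϱ b ≠ f0 := fun h => hb2 (by rw [← h, hϱ b])
              have hb4 : ϱ b ≠ ϱ f0 := fun h => hb1 (hϱ.injective h)
              exact absurd (⟨ϱ b, ⟨hb3, hb4⟩, this.symm⟩ : γ t ∈ B) (hγB t)
        · by_cases hb1 : b = f0
          · simp only [if_neg ha1, if_neg ha2, if_pos hb1] at hab
            exact absurd (⟨a, ⟨ha1, ha2⟩, hab⟩ : γ t ∈ B) (hγB t)
          · by_cases hb2 : b = ϱ f0
            · simp only [if_neg ha1, if_neg ha2, if_neg hb1, if_pos hb2] at hab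
              have : γ t = antip (z a) := by
                rw [← antip_antip (γ t), ← hab]
              rw [← hrel a] at this
              have ha3 : ϱ a ≠ f0 := fun h => ha2 (by rw [← h, hϱ a])
              have ha4 : ϱ a ≠ ϱ f0 := fun h => ha1 (hϱ.injective h)
              exact absurd (⟨ϱ a, ⟨ha3, ha4⟩, this.symm⟩ : γ t ∈ B) (hγB t)
            · simp only [if_neg ha1, if_neg ha2, if_neg hb1, if_neg hb2] at hab
              exact hinj hab
    · -- the antipodal relation
      intro f
      by_cases h1 : f = f0
      · subst h1
        simp [hfree f]
      · by_cases h2 : f = ϱ f0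
        · subst h2
          rw [hϱ f0]
          simp [hfree f0, antip_antip]
        · have h3 : ϱ f ≠ f0 := fun h => h2 (by rw [← h, hϱ f])
          have h4 : ϱ f ≠ ϱ f0 := fun h => h1 (hϱ.injective h)
          simp only [if_neg h3, if_neg h4, if_neg h1, if_neg h2]
          exact hrel f

lemma exists_rep_fn {F : Type} (ϱ : F → F) (hϱ : Function.Involutive ϱ) :
    ∃ rep : F → F, (∀ f, rep f = f ∨ rep f = ϱ f) ∧ (∀ f, rep (ϱ f) = rep f) ∧
      (∀ f, rep (rep f) = rep f) := by
  classical
  set r : F → F → Prop := fun f g => ϱ f = g with hr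
  have sec : ∀ q : Quot r, ∃ f, Quot.mk r f = q := fun q => Quot.exists_rep q
  choose sec hsec using sec
  refine ⟨fun f => sec (Quot.mk r f), ?_, ?_, ?_⟩
  · intro f
    have h := hsec (Quot.mk r f)
    rw [Quot.eq] at h
    have key : ∀ a b : F, Relation.EqvGen r a b → a = b ∨ a = ϱ b := by
      intro a b hab
      induction hab with
      | rel x y hxy => exact Or.inr (by rw [← hxy, hϱ x])
      | refl x => exact Or.inl rfl
      | symm x y _ ih =>
        rcases ih with h | h
        · exact Or.inl h.symm
        · exact Or.inr (by rw [h, hϱ y])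
      | trans x y zz _ _ ih1 ih2 =>
        rcases ih1 with h | h <;> rcases ih2 with h' | h'
        · exact Or.inl (h.trans h')
        · exact Or.inr (by rw [h, h'])
        · exact Or.inr (by rw [h, h'])
        · exact Or.inl (by rw [h, h', hϱ zz])
    exact key _ _ h
  · intro f
    have h : Quot.mk r f = Quot.mk r (ϱ f) := Quot.sound rfl
    show sec (Quot.mk r (ϱ f)) = sec (Quot.mk r f)
    rw [h]
  · intro f
    show sec (Quot.mk r (sec (Quot.mk r f))) = sec (Quot.mk r f)
    rw [hsec (Quot.mk r f)]

lemma exists_generic {F : Type} [Fintype F] {ϱ : F → F} (hϱ : Function.Involutive ϱ)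
    (hfree : ∀ f, ϱ f ≠ f) (rep : F → F) (hrep1 : ∀ f, rep f = f ∨ rep f = ϱ f)
    (hrep2 : ∀ f, rep (ϱ f) = rep f) (A : Set (OnePoint ℂ)) (hA : A.Finite) :
    ∃ g ∈ ConfEmpty F ϱ, ∀ f, g f ∉ A := by
  classical
  set m1 : ℝ → OnePoint ℂ := fun x => ((x : ℂ) : OnePoint ℂ) with hm1
  set m2 : ℝ → OnePoint ℂ := fun x => (((-1) / (x : ℂ) : ℂ) : OnePoint ℂ) with hm2
  have hm1inj : Function.Injective m1 := fun x y h => by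
    have := OnePoint.coe_injective h
    exact_mod_cast this
  have hm2inj : Function.Injective m2 := by
    intro x y h
    have h' : ((-1) / (x : ℂ) : ℂ) = ((-1) / (y : ℂ) : ℂ) := OnePoint.coe_injective h
    rw [neg_div, neg_div, neg_inj, one_div, one_div] at h'
    have := inv_injective h'
    exact_mod_cast this
  have hS : (Set.Ioi (1:ℝ) \ (m1 ⁻¹' A ∪ m2 ⁻¹' A)).Infinite := by
    refine Set.Infinite.diff ?_ ?_
    · exact Set.Ioi_infinite 1
    · exact (hA.preimage hm1inj.injOn).union (hA.preimage hm2inj.injOn)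
  let emb : F ↪ ↥(Set.Ioi (1:ℝ) \ (m1 ⁻¹' A ∪ m2 ⁻¹' A)) :=
    (Fintype.equivFin F).toEmbedding.trans (Fin.valEmbedding.trans hS.natEmbedding)
  set u : F → ℝ := fun f => (emb f : ℝ) with hu
  have hu1 : ∀ f, 1 < u f := fun f => (emb f).2.1
  have hu0 : ∀ f, (u f : ℂ) ≠ 0 := fun f => by
    have : (0:ℝ) < u f := lt_trans one_pos (hu1 f)
    exact_mod_cast ne_of_gt this
  have huA1 : ∀ f, m1 (u f) ∉ A := fun f h => (emb f).2.2 (Or.inl h)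
  have huA2 : ∀ f, m2 (u f) ∉ A := fun f h => (emb f).2.2 (Or.inr h)
  have huinj : Function.Injective u := fun a b h => emb.injective (Subtype.ext h)
  set g : F → OnePoint ℂ := fun f => if rep f = f then (((u f : ℝ) : ℂ) : OnePoint ℂ)
    else ((((-1) / ((u (ϱ f) : ℝ) : ℂ)) : ℂ) : OnePoint ℂ) with hg
  have hchosen : ∀ f, rep f = f → rep (ϱ f) ≠ ϱ f := by
    intro f hf hcontra
    have : rep (ϱ f) = f := by rw [hrep2 f, hf]
    exact hfree f (by rw [← hcontra, this])
  have hunchosen : ∀ f, rep f ≠ f → rep (ϱ f) = ϱ f := by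
    intro f hf
    rcases hrep1 f with h | h
    · exact absurd h hf
    · rw [hrep2 f, h]
  refine ⟨g, ⟨?_, ?_⟩, ?_⟩
  · -- injectivity
    intro a b hab
    simp only [hg] at hab
    by_cases ha : rep a = a <;> by_cases hb : rep b = b
    · rw [if_pos ha, if_pos hb] at hab
      have := OnePoint.coe_injective hab
      have : u a = u b := by exact_mod_cast this
      exact huinj this
    · rw [if_pos ha, if_neg hb] at hab
      have h' := OnePoint.coe_injective hab
      have h2 : ((u a : ℝ) : ℂ) = (((-1) / (u (ϱ b)) : ℝ) : ℂ) := by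
        rw [h']; push_cast; ring
      have h3 : u a = (-1) / (u (ϱ b)) := by exact_mod_cast h2
      have h4 : (0:ℝ) < u (ϱ b) := lt_trans one_pos (hu1 (ϱ b))
      have h5 : (-1 : ℝ) / (u (ϱ b)) < 0 := div_neg_of_neg_of_pos (by norm_num) h4
      have := hu1 a
      linarith
    · rw [if_neg ha, if_pos hb] at hab
      have h' := OnePoint.coe_injective hab
      have h2 : ((u b : ℝ) : ℂ) = (((-1) / (u (ϱ a)) : ℝ) : ℂ) := by
        rw [← h']; push_cast; ring
      have h3 : u b = (-1) / (u (ϱ a)) := by exact_mod_cast h2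
      have h4 : (0:ℝ) < u (ϱ a) := lt_trans one_pos (hu1 (ϱ a))
      have h5 : (-1 : ℝ) / (u (ϱ a)) < 0 := div_neg_of_neg_of_pos (by norm_num) h4
      have := hu1 b
      linarith
    · rw [if_neg ha, if_neg hb] at hab
      have h' := OnePoint.coe_injective hab
      rw [neg_div, neg_div, neg_inj, one_div, one_div] at h'
      have h2 := inv_injective h'
      have h3 : u (ϱ a) = u (ϱ b) := by exact_mod_cast h2
      exact hϱ.injective (huinj h3)
  · -- antipodal relation
    intro f
    simp only [hg]
    by_cases hc : rep f = f
    · rw [if_pos hc, if_neg (hchosen f hc), hϱ f, antip_coe_ne _ (hu0 f)]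
      congr 1
      rw [Complex.conj_ofReal]
    · rw [if_neg hc, if_pos (hunchosen f hc)]
      have hne : ((-1) / ((u (ϱ f) : ℝ) : ℂ) : ℂ) ≠ 0 := by
        rw [div_ne_zero_iff]
        exact ⟨by norm_num, hu0 (ϱ f)⟩
      rw [antip_coe_ne _ hne]
      congr 1
      rw [map_div₀, map_neg, map_one, Complex.conj_ofReal]
      field_simp
  · -- avoids A
    intro f
    simp only [hg]
    by_cases hc : rep f = f
    · rw [if_pos hc]; exact huA1 f
    · rw [if_neg hc]; exact huA2 (ϱ f)

lemma reach {F : Type} [Fintype F] {ϱ : F → F} (hϱ : Function.Involutive ϱ)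
    (hfree : ∀ f, ϱ f ≠ f) (rep : F → F) (hrep1 : ∀ f, rep f = f ∨ rep f = ϱ f)
    (hrep2 : ∀ f, rep (ϱ f) = rep f) (hrep3 : ∀ f, rep (rep f) = rep f)
    {z g : F → OnePoint ℂ} (hz : z ∈ ConfEmpty F ϱ) (hg : g ∈ ConfEmpty F ϱ)
    (hgen : ∀ f f', g f ≠ z f') (s : Finset F) :
    JoinedIn (ConfEmpty F ϱ) z (fun f => if rep f ∈ s then g f else z f) := by
  classical
  induction s using Finset.induction_on with
  | empty => simpa using JoinedIn.refl hz
  | @insert a s ha ih =>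
    by_cases hc : rep a = a
    · have hmem := ih.target_mem
      have hv : ∀ f, f ≠ a → f ≠ ϱ a →
          g a ≠ (fun f => if rep f ∈ s then g f else z f) f := by
        intro f h1 h2
        by_cases h : rep f ∈ s
        · simp only [if_pos h]
          intro he; exact h1 (hg.1 he).symm
        · simp only [if_neg h]
          exact hgen a f
      have hmove := move_pair hϱ hfree hmem a (g a) hv
      have heq : (fun f => if f = a then g a else if f = ϱ a then antip (g a)
          else (fun f => if rep f ∈ s then g f else z f) f)
          = (fun f => if rep f ∈ insert a s then g f else z f) := by
        funext f
        by_cases h1 : f = a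
        · subst h1
          simp [hc]
        · by_cases h2 : f = ϱ a
          · subst h2
            rw [if_neg h1, if_pos rfl]
            have hra : rep (ϱ a) = a := by rw [hrep2 a, hc]
            rw [if_pos (by rw [hra]; exact Finset.mem_insert_self a s)]
            exact (hg.2 a).symm
          · rw [if_neg h1, if_neg h2]
            have hne : rep f ≠ a := by
              intro he
              rcases hrep1 f with h | h
              · exact h1 (by rw [← h, he])
              · exact h2 ((hϱ f).symm.trans (congrArg ϱ (h.symm.trans he)))
            simp [Finset.mem_insert, hne]
      rw [heq] at hmove
      exact ih.trans hmove
    · have heqn : (fun f => if rep f ∈ insert a s then g f else z f)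
          = (fun f => if rep f ∈ s then g f else z f) := by
        funext f
        by_cases h : rep f ∈ s
        · simp [h, Finset.mem_insert]
        · have hne : rep f ≠ a := fun he => hc (by rw [← he, hrep3 f])
          simp [h, Finset.mem_insert, hne]
      rw [heqn]
      exact ih

end Aux

/-- for a fixed-point-free involution `ϱ` with `|F| = 2k`, `k ≥ 1`, the
configuration space `Conf^∅_{(F,ϱ)}` is path-connected. -/
theorem stmt7 (F : Type) [Fintype F] (ϱ : F → F) (hϱ : Function.Involutive ϱ)
    (hfree : ∀ f, ϱ f ≠ f) (k : ℕ) (hk : Nat.card F = 2 * k) (h1 : 1 ≤ k) :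
    IsPathConnected (ConfEmpty F ϱ) := by
  classical
  obtain ⟨rep, hrep1, hrep2, hrep3⟩ := exists_rep_fn ϱ hϱ
  obtain ⟨g0, hg0, -⟩ := exists_generic hϱ hfree rep hrep1 hrep2
    (∅ : Set (OnePoint ℂ)) Set.finite_empty
  refine ⟨g0, hg0, ?_⟩
  intro y hy
  obtain ⟨g, hg, hgA⟩ := exists_generic hϱ hfree rep hrep1 hrep2
    (Set.range g0 ∪ Set.range y) ((Set.finite_range g0).union (Set.finite_range y))
  have hgen0 : ∀ f f', g f ≠ g0 f' := fun f f' h => hgA f (Or.inl ⟨f', h.symm⟩)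
  have hgeny : ∀ f f', g f ≠ y f' := fun f f' h => hgA f (Or.inr ⟨f', h.symm⟩)
  have h1 := reach hϱ hfree rep hrep1 hrep2 hrep3 hg0 hg hgen0 Finset.univ
  have h2 := reach hϱ hfree rep hrep1 hrep2 hrep3 hy hg hgeny Finset.univ
  have he : ∀ w : F → OnePoint ℂ,
      (fun f => if rep f ∈ (Finset.univ : Finset F) then g f else w f) = g := by
    intro w; funext f; simp
  rw [he g0] at h1
  rw [he y] at h2
  exact h1.trans h2.symm
end
end
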